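/- arXiv:2306.02799 — 4 statements merged into one kernel-verified Lean document; each statement's English description precedes it below -/
import Mathlib

section
/- Let N ≥ 1, let X : ℝ^N → ℝ^N be a continuous vector field, let z ∈ ℝ^N, and let γ : ℝ → ℝ^N be an integral curve of X through z (γ(0) = z and γ'(s) = X(γ(s)) for all s in a neighborhood of 0). Let u : ℝ^N → ℝ be differentiable on a neighborhood of z containing γ(s) for all small s, and suppose the function Xu is differentiable at z. Then, as h → 0, u(γ(h)) = u(z) + h·(Xu)(z) + (h²/2)·(D(Xu)(z))(X(z)) + o(h²). (This is the base step of the anisotropic Taylor theorem: the second-order Taylor expansion of u along a single horizontal vector field.) -/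
open Filter Asymptotics

lemma taylor2_aux {f g : ℝ → ℝ} {c : ℝ}
    (hf : ∀ᶠ s in nhds (0:ℝ), HasDerivAt f (g s) s) (hg : HasDerivAt g c 0) :
    (fun h : ℝ => f h - f 0 - h * g 0 - h ^ 2 / 2 * c) =o[nhds (0:ℝ)] fun h => h ^ 2 := by
  set φ : ℝ → ℝ := fun h => f h - f 0 - h * g 0 - h ^ 2 / 2 * c with hφ
  set ψ : ℝ → ℝ := fun s => g s - g 0 - s * c with hψ
  have hφ' : ∀ᶠ s in nhds (0:ℝ), HasDerivAt φ (ψ s) s := by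
    filter_upwards [hf] with s hs
    have h1 : HasDerivAt φ (g s - 1 * g 0 - 2 * s ^ 1 / 2 * c) s :=
      ((hs.sub_const (f 0)).sub ((hasDerivAt_id s).mul_const (g 0))).sub
        (((hasDerivAt_pow 2 s).div_const 2).mul_const c)
    convert h1 using 1
    simp only [hψ]; ring
  have hlo : ψ =o[nhds (0:ℝ)] fun s => s := by
    have := hg.isLittleO
    simpa [hψ, mul_comm] using this
  rw [isLittleO_iff]
  intro ε hε
  have h1 := hlo.def (half_pos hε) |>.and hφ'
  rcases Metric.eventually_nhds_iff_ball.mp h1 with ⟨δ, hδ, hball⟩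
  have : ∀ᶠ h : ℝ in nhds 0, h ∈ Metric.ball (0:ℝ) δ := Metric.ball_mem_nhds 0 hδ
  filter_upwards [this] with h hh
  have hseg : ∀ s ∈ segment ℝ (0:ℝ) h, s ∈ Metric.ball (0:ℝ) δ ∧ |s| ≤ |h| := by
    intro s hs
    rcases hs with ⟨a, b, ha, hb, hab, rfl⟩
    have habs : |a • (0:ℝ) + b • h| ≤ |h| := by
      simp only [smul_eq_mul, mul_zero, zero_add, abs_mul]
      calc |b| * |h| ≤ 1 * |h| := by
            apply mul_le_mul_of_nonneg_right _ (abs_nonneg h)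
            rw [abs_of_nonneg hb]; linarith
        _ = |h| := one_mul _
    constructor
    · rw [Metric.mem_ball, Real.dist_eq, sub_zero]
      exact lt_of_le_of_lt habs (by simpa [Real.dist_eq] using hh)
    · exact habs
  have hC : ∀ s ∈ segment ℝ (0:ℝ) h, ‖ψ s‖ ≤ ε / 2 * |h| := by
    intro s hs
    obtain ⟨hsball, hsle⟩ := hseg s hs
    have := (hball s hsball).1
    calc ‖ψ s‖ ≤ ε / 2 * ‖s‖ := this
      _ ≤ ε / 2 * |h| := by
          apply mul_le_mul_of_nonneg_left _ (half_pos hε).le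
          simpa using hsle
  have hd : ∀ s ∈ segment ℝ (0:ℝ) h, HasDerivWithinAt φ (ψ s) (segment ℝ (0:ℝ) h) s :=
    fun s hs => ((hball s (hseg s hs).1).2).hasDerivWithinAt
  have hmvt := (convex_segment (0:ℝ) h).norm_image_sub_le_of_norm_hasDerivWithin_le
    hd hC (left_mem_segment ℝ 0 h) (right_mem_segment ℝ 0 h)
  have hφ0 : φ 0 = 0 := by simp [hφ]
  have : ‖φ h‖ ≤ ε / 2 * |h| * |h| := by
    simpa [hφ0, Real.norm_eq_abs] using hmvt
  calc ‖φ h‖ ≤ ε / 2 * |h| * |h| := this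
    _ = ε / 2 * h ^ 2 := by rw [mul_assoc, ← abs_mul, ← sq, abs_sq]
    _ ≤ ε * h ^ 2 := by nlinarith [sq_nonneg h, hε.le]
    _ = ε * ‖h ^ 2‖ := by rw [Real.norm_eq_abs, abs_of_nonneg (sq_nonneg h)]

/-- Base step of the anisotropic Taylor theorem: second-order Taylor expansion of a
function `u` along an integral curve `γ` of a single horizontal vector field `X`. -/
theorem taylor_expansion_along_vector_field {N : ℕ} (hN : 1 ≤ N)
    (X : EuclideanSpace ℝ (Fin N) → EuclideanSpace ℝ (Fin N)) (hX : Continuous X)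
    (z : EuclideanSpace ℝ (Fin N))
    (γ : ℝ → EuclideanSpace ℝ (Fin N)) (hγ0 : γ 0 = z)
    (hγ : ∀ᶠ s in nhds (0 : ℝ), HasDerivAt γ (X (γ s)) s)
    (u : EuclideanSpace ℝ (Fin N) → ℝ)
    (U : Set (EuclideanSpace ℝ (Fin N))) (hU : U ∈ nhds z)
    (hu : ∀ p ∈ U, DifferentiableAt ℝ u p)
    (hγU : ∀ᶠ s in nhds (0 : ℝ), γ s ∈ U)
    (hXu : DifferentiableAt ℝ (fun p => fderiv ℝ u p (X p)) z) :
    (fun h : ℝ => u (γ h) - u z - h * fderiv ℝ u z (X z)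
        - h ^ 2 / 2 * fderiv ℝ (fun p => fderiv ℝ u p (X p)) z (X z))
      =o[nhds (0 : ℝ)] fun h => h ^ 2 := by
  have hγz : HasDerivAt γ (X z) 0 := by
    have := hγ.self_of_nhds
    simpa [hγ0] using this
  have hf : ∀ᶠ s in nhds (0:ℝ), HasDerivAt (fun s => u (γ s))
      ((fun s => fderiv ℝ u (γ s) (X (γ s))) s) s := by
    filter_upwards [hγ, hγU] with s h1 h2
    exact (hu (γ s) h2).hasFDerivAt.comp_hasDerivAt s h1
  have hg : HasDerivAt (fun s => fderiv ℝ u (γ s) (X (γ s)))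
      (fderiv ℝ (fun p => fderiv ℝ u p (X p)) z (X z)) 0 := by
    rw [← hγ0] at hXu
    have := hXu.hasFDerivAt.comp_hasDerivAt 0 (by simpa [hγ0] using hγz)
    simpa [hγ0, Function.comp_def] using this
  have := taylor2_aux hf hg
  simpa [hγ0] using this
end

section
/- Let X, Y : ℝ^N → ℝ^N be vector fields of class C² admitting global flows φ and ψ respectively. Fix z ∈ ℝ^N and define the commutator path P(a) = ψ(−a, φ(−a, ψ(a, φ(a, z)))). Then ‖P(a) − z − a²·[X,Y](z)‖ = o(a²) as a → 0, where [X,Y](p) = DY(p)(X(p)) − DX(p)(Y(p)) is the Lie bracket. (This second-order commutator expansion of composed flows is the geometric backbone of the inductive step of the anisotropic Taylor theorem, where increments in commutator directions are realized by four elementary flow displacements.) -/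
open Filter Asymptotics Set Metric

section Aux

variable {E : Type*} [NormedAddCommGroup E] [NormedSpace ℝ E]

/-- Escape-time bound: a solution of `u' = W(u)` starting at `p` stays within `M·t`
of `p` as long as `W` is bounded by `M - 1` on the relevant ball. -/
lemma escape_aux {W : E → E} (hW : Continuous W) {u : ℝ → E} {p : E}
    (hu0 : u 0 = p) (hu : ∀ t, HasDerivAt u (W (u t)) t)
    {M T : ℝ} (hM : 1 ≤ M) (hT : 0 ≤ T)
    (hbound : ∀ q, ‖q - p‖ ≤ M * T → ‖W q‖ ≤ M - 1) :
    ∀ t ∈ Set.Icc (0:ℝ) T, ‖u t - p‖ ≤ M * t := by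
  have hcont : Continuous u := by
    rw [continuous_iff_continuousAt]; exact fun t => (hu t).continuousAt
  set A : Set ℝ := {t | ‖u t - p‖ ≤ M * t} with hAdef
  have hA : IsClosed A := isClosed_le (by fun_prop) (by fun_prop)
  intro t ht
  refine (IsClosed.Icc_subset_of_forall_mem_nhdsWithin (hA.inter isClosed_Icc) ?_ ?_) ht
  · show ‖u 0 - p‖ ≤ M * 0
    simp [hu0]
  · rintro x ⟨hxA, hx0, hxT⟩
    have hxA' : ‖u x - p‖ ≤ M * x := hxA
    have hx' : ‖u x - p‖ ≤ M * T := le_trans hxA' (by nlinarith)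
    have h1 : ‖W (u x)‖ < M := lt_of_le_of_lt (hbound _ hx') (by linarith)
    have h2 : ∀ᶠ s in nhds x, ‖W (u s)‖ ≤ M := by
      have hc : ContinuousAt (fun s => ‖W (u s)‖) x := by fun_prop
      exact (hc.eventually_lt_const h1).mono fun s hs => le_of_lt hs
    obtain ⟨η, hη, hball⟩ := Metric.eventually_nhds_iff.1 h2
    have hsub : Set.Ioc x (x + η / 2) ⊆ A := by
      intro y hy
      obtain ⟨hxy, hyx⟩ := hy
      have hmvt : ‖u y - u x‖ ≤ M * ‖y - x‖ := by
        refine Convex.norm_image_sub_le_of_norm_hasDerivWithin_le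
          (f' := fun s => W (u s)) (fun s _ => (hu s).hasDerivWithinAt) ?_
          (convex_Icc x y) (Set.left_mem_Icc.2 (le_of_lt hxy)) (Set.right_mem_Icc.2 (le_of_lt hxy))
        intro s hs
        apply hball
        rw [Real.dist_eq]
        have : x ≤ s := hs.1
        have : s ≤ y := hs.2
        rw [abs_of_nonneg (by linarith)]
        linarith
      have : ‖u y - p‖ ≤ ‖u y - u x‖ + ‖u x - p‖ := norm_sub_le_norm_sub_add_norm_sub _ _ _
      show ‖u y - p‖ ≤ M * y
      rw [Real.norm_eq_abs, abs_of_nonneg (by linarith : (0:ℝ) ≤ y - x)] at hmvt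
      nlinarith
    exact mem_of_superset (Ioc_mem_nhdsGT_of_mem ⟨le_rfl, by linarith⟩) hsub

/-- Two-sided version of the escape bound. -/
lemma escape_abs {W : E → E} (hW : Continuous W) {u : ℝ → E} {p : E}
    (hu0 : u 0 = p) (hu : ∀ t, HasDerivAt u (W (u t)) t)
    {M T : ℝ} (hM : 1 ≤ M)
    (hbound : ∀ q, ‖q - p‖ ≤ M * T → ‖W q‖ ≤ M - 1) :
    ∀ s : ℝ, |s| ≤ T → ‖u s - p‖ ≤ M * |s| := by
  intro s hs
  have hT : 0 ≤ T := le_trans (abs_nonneg s) hs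
  rcases le_total 0 s with h | h
  · rw [abs_of_nonneg h] at hs ⊢
    exact escape_aux hW hu0 hu hM hT hbound s ⟨h, hs⟩
  · rw [abs_of_nonpos h] at hs ⊢
    have hw : ∀ t, HasDerivAt (fun t => u (-t)) (-W (u (-t))) t := by
      intro t
      have := (hu (-t)).scomp t (hasDerivAt_neg t)
      simpa [Function.comp_def] using this
    have := escape_aux (W := fun q => -W q) hW.neg (u := fun t => u (-t)) (by simpa using hu0)
      hw hM hT (fun q hq => by simpa using hbound q hq) (-s) ⟨by linarith, hs⟩
    simpa using this

/-- Second-order Taylor estimate from a sup bound on the oscillation of the second derivative. -/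
lemma taylor2 {u du ddu : ℝ → E}
    (hu : ∀ t, HasDerivAt u (du t) t) (hdu : ∀ t, HasDerivAt du (ddu t) t)
    {b C : ℝ} (hbound : ∀ t ∈ Set.uIcc (0:ℝ) b, ‖ddu t - ddu 0‖ ≤ C) :
    ‖u b - u 0 - b • du 0 - (b ^ 2 / 2) • ddu 0‖ ≤ C * b ^ 2 := by
  have habs : ∀ t ∈ Set.uIcc (0:ℝ) b, |t| ≤ |b| := by
    intro t ht
    rcases Set.mem_uIcc.1 ht with ⟨h1, h2⟩ | ⟨h1, h2⟩
    · rw [abs_of_nonneg h1]; exact le_trans h2 (le_abs_self b)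
    · rw [abs_of_nonpos h2]; exact le_trans (by linarith) (neg_le_abs b)
  have hk : ∀ t ∈ Set.uIcc (0:ℝ) b, ‖du t - du 0 - t • ddu 0‖ ≤ C * |b| := by
    intro t ht
    have hder : ∀ s ∈ Set.uIcc (0:ℝ) b,
        HasDerivWithinAt (fun s => du s - s • ddu 0) (ddu s - ddu 0) (Set.uIcc (0:ℝ) b) s := by
      intro s _
      exact ((hdu s).sub ((hasDerivAt_id s).smul_const (ddu 0) |>.congr_deriv (one_smul ℝ _))).hasDerivWithinAt
    have := Convex.norm_image_sub_le_of_norm_hasDerivWithin_le hder hbound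
      (convex_uIcc _ _) Set.left_mem_uIcc ht
    simp only [zero_smul, sub_zero] at this
    refine le_trans (le_trans (le_of_eq (by congr 1; abel)) this) ?_
    have hC : 0 ≤ C := le_trans (norm_nonneg _) (hbound 0 Set.left_mem_uIcc)
    exact mul_le_mul_of_nonneg_left (habs t ht) hC
  have hder2 : ∀ s ∈ Set.uIcc (0:ℝ) b,
      HasDerivWithinAt (fun s => u s - s • du 0 - (s ^ 2 / 2) • ddu 0)
        (du s - du 0 - s • ddu 0) (Set.uIcc (0:ℝ) b) s := by
    intro s _
    have h1 : HasDerivAt (fun s : ℝ => s • du 0) (du 0) s :=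
      (hasDerivAt_id s).smul_const (du 0) |>.congr_deriv (one_smul ℝ _)
    have h2 : HasDerivAt (fun s : ℝ => (s ^ 2 / 2) • ddu 0) (s • ddu 0) s := by
      have := ((hasDerivAt_pow 2 s).div_const 2).smul_const (ddu 0)
      simpa using this
    exact (((hu s).sub h1).sub h2).hasDerivWithinAt
  have := Convex.norm_image_sub_le_of_norm_hasDerivWithin_le hder2 hk
    (convex_uIcc _ _) Set.left_mem_uIcc Set.right_mem_uIcc
  simp only [zero_smul, sub_zero, ne_eq, OfNat.ofNat_ne_zero, not_false_eq_true, zero_pow,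
    zero_div] at this
  refine le_trans (le_trans (le_of_eq (by congr 1; abel)) this) (le_of_eq ?_)
  rw [Real.norm_eq_abs, mul_assoc, abs_mul_abs_self, sq]

/-- Uniform second-order expansion of the flow of a `C²` vector field. -/
lemma flow_uniform_expansion [ProperSpace E]
    {V : E → E} (hV : ContDiff ℝ 2 V)
    {Φ : ℝ × E → E} (hΦ0 : ∀ p, Φ (0, p) = p)
    (hΦ : ∀ (a : ℝ) (p : E), HasDerivAt (fun t => Φ (t, p)) (V (Φ (a, p))) a)
    (z : E) {ε : ℝ} (hε : 0 < ε) :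
    ∃ δ > 0, ∀ b p, |b| ≤ δ → ‖p - z‖ ≤ δ →
      ‖Φ (b, p) - p - b • V p - (b ^ 2 / 2) • (fderiv ℝ V p) (V p)‖ ≤ ε * b ^ 2 := by
  have hVc : Continuous V := hV.continuous
  have hVd : Differentiable ℝ V := hV.differentiable (by norm_num)
  have hDV : ContDiff ℝ 1 (fderiv ℝ V) := hV.fderiv_right (by norm_num)
  set LV : E → E := fun q => (fderiv ℝ V q) (V q) with hLVdef
  have hLV : Continuous LV := hDV.continuous.clm_apply hVc
  obtain ⟨M₀, hM₀⟩ := (isCompact_closedBall z 2).exists_bound_of_continuousOn hVc.continuousOn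
  set M : ℝ := max M₀ 0 + 1 with hMdef
  have hM1 : 1 ≤ M := by have := le_max_right M₀ 0; simp only [hMdef]; linarith
  have hMb : ∀ q ∈ closedBall z 2, ‖V q‖ ≤ M - 1 := by
    intro q hq
    have := hM₀ q hq
    simp only [hMdef, add_sub_cancel_right]
    exact le_trans this (le_max_left _ _)
  have huc := (isCompact_closedBall z 2).uniformContinuousOn_of_continuous hLV.continuousOn
  obtain ⟨η, hη, hucb⟩ := Metric.uniformContinuousOn_iff_le.1 huc ε hε
  have hM0 : 0 < M := by linarith
  refine ⟨min (min 1 (1/M)) (η/M), by positivity, ?_⟩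
  intro b p hb hp
  set u : ℝ → E := fun t => Φ (t, p) with hudef
  have hu0 : u 0 = p := hΦ0 p
  have hu : ∀ t, HasDerivAt u (V (u t)) t := fun t => hΦ t p
  have hbδ1 : |b| ≤ 1 := le_trans hb (le_trans (min_le_left _ _) (min_le_left _ _))
  have hbδ2 : |b| ≤ 1/M := le_trans hb (le_trans (min_le_left _ _) (min_le_right _ _))
  have hbδ3 : |b| ≤ η/M := le_trans hb (min_le_right _ _)
  have hpδ : ‖p - z‖ ≤ 1 := le_trans hp (le_trans (min_le_left _ _) (min_le_left _ _))
  have hMb1 : M * |b| ≤ 1 := by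
    rw [← mul_one_div_cancel (ne_of_gt hM0)]
    exact mul_le_mul_of_nonneg_left hbδ2 (le_of_lt hM0)
  have hMbη : M * |b| ≤ η := by
    calc M * |b| ≤ M * (η/M) := mul_le_mul_of_nonneg_left hbδ3 (le_of_lt hM0)
    _ = η := by field_simp
  have hbound : ∀ q, ‖q - p‖ ≤ M * |b| → ‖V q‖ ≤ M - 1 := by
    intro q hq
    refine hMb q ?_
    rw [mem_closedBall, dist_eq_norm]
    calc ‖q - z‖ ≤ ‖q - p‖ + ‖p - z‖ := norm_sub_le_norm_sub_add_norm_sub _ _ _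
      _ ≤ 1 + 1 := add_le_add (le_trans hq hMb1) hpδ
      _ = 2 := by norm_num
  have hstay := escape_abs hVc hu0 hu hM1 hbound
  have hmem : ∀ t ∈ Set.uIcc (0:ℝ) b, u t ∈ closedBall z 2 ∧ ‖u t - p‖ ≤ η := by
    intro t ht
    have habs : |t| ≤ |b| := by
      rcases Set.mem_uIcc.1 ht with ⟨h1, h2⟩ | ⟨h1, h2⟩
      · rw [abs_of_nonneg h1]; exact le_trans h2 (le_abs_self b)
      · rw [abs_of_nonpos h2]; exact le_trans (by linarith) (neg_le_abs b)
    have h1 : ‖u t - p‖ ≤ M * |t| := hstay t habs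
    have h2 : ‖u t - p‖ ≤ M * |b| :=
      le_trans h1 (mul_le_mul_of_nonneg_left habs (le_of_lt hM0))
    constructor
    · rw [mem_closedBall, dist_eq_norm]
      calc ‖u t - z‖ ≤ ‖u t - p‖ + ‖p - z‖ := norm_sub_le_norm_sub_add_norm_sub _ _ _
        _ ≤ 1 + 1 := add_le_add (le_trans h2 hMb1) hpδ
        _ = 2 := by norm_num
    · exact le_trans h2 hMbη
  have hdu : ∀ t, HasDerivAt (fun t => V (u t)) (LV (u t)) t := fun t =>
    ((hVd (u t)).hasFDerivAt).comp_hasDerivAt t (hu t)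
  have hpmem : p ∈ closedBall z 2 := by
    rw [mem_closedBall, dist_eq_norm]; linarith
  have hbound2 : ∀ t ∈ Set.uIcc (0:ℝ) b, ‖LV (u t) - LV (u 0)‖ ≤ ε := by
    intro t ht
    obtain ⟨hmem1, hmem2⟩ := hmem t ht
    rw [hu0]
    rw [← dist_eq_norm]
    refine hucb (u t) hmem1 p hpmem ?_
    rw [dist_eq_norm]; exact hmem2
  have := taylor2 hu hdu hbound2
  rw [hu0] at this
  simpa using this

/-- One flow step refines a second-order expansion. -/
lemma flow_step [ProperSpace E]
    {V : E → E} (hV : ContDiff ℝ 2 V)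
    {Φ : ℝ × E → E} (hΦ0 : ∀ p, Φ (0, p) = p)
    (hΦ : ∀ (a : ℝ) (p : E), HasDerivAt (fun t => Φ (t, p)) (V (Φ (a, p))) a)
    (z : E) (σ : ℝ) (hσ : |σ| ≤ 1) {p : ℝ → E} {v c : E}
    (hp : (fun a => p a - z - a • v - a ^ 2 • c) =o[nhds (0:ℝ)] fun a => a ^ 2) :
    (fun a => Φ (σ * a, p a) - z - a • (v + σ • V z)
        - a ^ 2 • (c + σ • ((fderiv ℝ V z) v) + (σ ^ 2 / 2) • ((fderiv ℝ V z) (V z))))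
      =o[nhds (0:ℝ)] fun a => a ^ 2 := by
  have hVd : Differentiable ℝ V := hV.differentiable (by norm_num)
  have hDV : ContDiff ℝ 1 (fderiv ℝ V) := hV.fderiv_right (by norm_num)
  set LV : E → E := fun q => (fderiv ℝ V q) (V q) with hLVdef
  have hLV : Continuous LV := hDV.continuous.clm_apply hV.continuous
  set D : E →L[ℝ] E := fderiv ℝ V z with hDdef
  -- basic asymptotics from hp
  have hsq : (fun a : ℝ => a ^ 2) =O[nhds (0:ℝ)] fun a => a := by
    rw [isBigO_iff]
    refine ⟨1, ?_⟩
    filter_upwards [Metric.closedBall_mem_nhds (0:ℝ) one_pos] with a ha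
    rw [mem_closedBall, Real.dist_eq, sub_zero] at ha
    rw [Real.norm_eq_abs, Real.norm_eq_abs, one_mul, sq, abs_mul]
    nlinarith [abs_nonneg a]
  have hsmul_const : ∀ (w : E), (fun a : ℝ => a ^ 2 • w) =O[nhds (0:ℝ)] fun a => a ^ 2 := by
    intro w
    rw [isBigO_iff]
    refine ⟨‖w‖, by filter_upwards with a; rw [norm_smul, mul_comm]⟩
  have hsmul_const1 : ∀ (w : E), (fun a : ℝ => a • w) =O[nhds (0:ℝ)] fun a => a := by
    intro w
    rw [isBigO_iff]
    refine ⟨‖w‖, by filter_upwards with a; rw [norm_smul, mul_comm]⟩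
  have hq : (fun a : ℝ => p a - z - a • v) =O[nhds (0:ℝ)] fun a => a ^ 2 := by
    have heq : (fun a : ℝ => p a - z - a • v)
        = fun a => (p a - z - a • v - a ^ 2 • c) + a ^ 2 • c := by
      funext a; abel
    rw [heq]
    exact hp.isBigO.add (hsmul_const c)
  have hpz : (fun a : ℝ => p a - z) =O[nhds (0:ℝ)] fun a => a := by
    have heq : (fun a : ℝ => p a - z) = fun a => (p a - z - a • v) + a • v := by
      funext a; abel
    rw [heq]
    exact (hq.trans hsq).add (hsmul_const1 v)
  have hptend : Tendsto p (nhds (0:ℝ)) (nhds z) := by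
    have h1 : Tendsto (fun a : ℝ => p a - z) (nhds 0) (nhds 0) :=
      hpz.trans_tendsto (by exact (continuous_id.tendsto (0:ℝ)))
    have := h1.add_const z
    simpa using this
  -- the five pieces
  have o1 : (fun a : ℝ => Φ (σ * a, p a) - p a - (σ * a) • V (p a)
      - ((σ * a) ^ 2 / 2) • LV (p a)) =o[nhds (0:ℝ)] fun a => a ^ 2 := by
    rw [isLittleO_iff]
    intro ε hε
    obtain ⟨δ, hδ, hδ'⟩ := flow_uniform_expansion hV hΦ0 hΦ z hε
    have h1 : ∀ᶠ a : ℝ in nhds 0, |a| ≤ δ := by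
      filter_upwards [Metric.closedBall_mem_nhds (0:ℝ) hδ] with a ha
      rw [mem_closedBall, Real.dist_eq, sub_zero] at ha; exact ha
    have h2 : ∀ᶠ a : ℝ in nhds 0, ‖p a - z‖ ≤ δ := by
      have hmem := hptend (Metric.closedBall_mem_nhds z hδ)
      filter_upwards [hmem] with a ha
      rw [Set.mem_preimage, mem_closedBall, dist_eq_norm] at ha; exact ha
    filter_upwards [h1, h2] with a ha1 ha2
    have hb : |σ * a| ≤ δ := by
      rw [abs_mul]
      nlinarith [abs_nonneg a, abs_nonneg σ]
    have hkey := hδ' (σ * a) (p a) hb ha2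
    refine le_trans hkey ?_
    rw [Real.norm_eq_abs, abs_of_nonneg (sq_nonneg a)]
    have hσ2 : σ ^ 2 ≤ 1 := by nlinarith [abs_nonneg σ, sq_abs σ]
    have : (σ * a) ^ 2 ≤ a ^ 2 := by nlinarith [sq_nonneg a]
    nlinarith
  have o3 : (fun a : ℝ => (σ * a) • (V (p a) - V z - D (p a - z)))
      =o[nhds (0:ℝ)] fun a => a ^ 2 := by
    have hd : HasFDerivAt V D z := (hVd z).hasFDerivAt
    have hlo := hd.isLittleO.comp_tendsto hptend
    have hσa : (fun a : ℝ => σ * a) =O[nhds (0:ℝ)] fun a => a :=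
      (isBigO_refl _ _).const_mul_left σ
    have o3' := hσa.smul_isLittleO hlo
    refine o3'.trans_isBigO ?_
    have h1 := (isBigO_refl (fun a : ℝ => a) (nhds 0)).smul hpz
    have heq : (fun a : ℝ => a • a) = fun a : ℝ => a ^ 2 := by
      funext a; rw [smul_eq_mul, sq]
    exact heq ▸ h1
  have o4 : (fun a : ℝ => (σ * a) • D (p a - z - a • v)) =o[nhds (0:ℝ)] fun a => a ^ 2 := by
    have h4a := D.isBigO_comp (fun a : ℝ => p a - z - a • v) (nhds 0)
    have hσa : (fun a : ℝ => σ * a) =o[nhds (0:ℝ)] fun _ => (1:ℝ) := by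
      rw [isLittleO_one_iff]
      have : Continuous (fun a : ℝ => σ * a) := by fun_prop
      simpa using this.tendsto 0
    have := hσa.smul_isBigO (h4a.trans hq)
    refine this.trans_isBigO ?_
    have heq : (fun a : ℝ => (1:ℝ) • a ^ 2) = fun a : ℝ => a ^ 2 := by
      funext a; rw [one_smul]
    rw [heq]
    exact isBigO_refl _ _
  have o5 : (fun a : ℝ => ((σ * a) ^ 2 / 2) • (LV (p a) - LV z)) =o[nhds (0:ℝ)] fun a => a ^ 2 := by
    have hk : (fun a : ℝ => (σ * a) ^ 2 / 2) =O[nhds (0:ℝ)] fun a => a ^ 2 := by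
      have heq : (fun a : ℝ => (σ * a) ^ 2 / 2) = fun a => (σ ^ 2 / 2) * a ^ 2 := by
        funext a; ring
      rw [heq]
      exact (isBigO_refl _ _).const_mul_left _
    have hg : Tendsto (fun a : ℝ => LV (p a) - LV z) (nhds 0) (nhds 0) := by
      have := ((hLV.tendsto z).comp hptend).sub_const (LV z)
      simpa using this
    have := hk.smul_isLittleO ((isLittleO_one_iff ℝ).2 hg)
    refine this.trans_isBigO ?_
    have heq : (fun a : ℝ => a ^ 2 • (1:ℝ)) = fun a : ℝ => a ^ 2 := by
      funext a; rw [smul_eq_mul, mul_one]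
    rw [heq]
    exact isBigO_refl _ _
  -- assemble
  have hsum : (fun a : ℝ => Φ (σ * a, p a) - z - a • (v + σ • V z)
      - a ^ 2 • (c + σ • (D v) + (σ ^ 2 / 2) • (D (V z))))
      = fun a : ℝ => (Φ (σ * a, p a) - p a - (σ * a) • V (p a) - ((σ * a) ^ 2 / 2) • LV (p a))
        + (p a - z - a • v - a ^ 2 • c)
        + (σ * a) • (V (p a) - V z - D (p a - z))
        + (σ * a) • D (p a - z - a • v)
        + ((σ * a) ^ 2 / 2) • (LV (p a) - LV z) := by
    funext a
    have hD1 : D (p a - z - a • v) = D (p a - z) - a • D v := by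
      rw [map_sub, map_smul]
    have hLVz : LV z = D (V z) := rfl
    rw [hD1, hLVz]
    have hmp : (σ * a) ^ 2 / 2 = (σ ^ 2 / 2) * a ^ 2 := by ring
    rw [hmp]
    module
  rw [hsum]
  exact (((o1.add hp).add o3).add o4).add o5

end Aux

/-- Second-order commutator expansion of composed flows: the four-fold commutator path
`ψ(−a, φ(−a, ψ(a, φ(a, z))))` equals `z + a² [X,Y](z) + o(a²)`. -/
theorem commutator_flow_expansion {N : ℕ}
    (X Y : EuclideanSpace ℝ (Fin N) → EuclideanSpace ℝ (Fin N))
    (hX : ContDiff ℝ 2 X) (hY : ContDiff ℝ 2 Y)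
    (φ ψ : ℝ × EuclideanSpace ℝ (Fin N) → EuclideanSpace ℝ (Fin N))
    (hφ0 : ∀ p, φ (0, p) = p)
    (hφ : ∀ (a : ℝ) (p : EuclideanSpace ℝ (Fin N)),
      HasDerivAt (fun t => φ (t, p)) (X (φ (a, p))) a)
    (hψ0 : ∀ p, ψ (0, p) = p)
    (hψ : ∀ (a : ℝ) (p : EuclideanSpace ℝ (Fin N)),
      HasDerivAt (fun t => ψ (t, p)) (Y (ψ (a, p))) a)
    (z : EuclideanSpace ℝ (Fin N)) :
    (fun a : ℝ => ‖ψ (-a, φ (-a, ψ (a, φ (a, z)))) - z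
        - a ^ 2 • VectorField.lieBracket ℝ X Y z‖)
      =o[nhds (0 : ℝ)] fun a => a ^ 2 := by
  have hone : |(1:ℝ)| ≤ 1 := by norm_num
  have hnegone : |(-1:ℝ)| ≤ 1 := by norm_num
  have h0 : (fun a : ℝ => (fun _ : ℝ => z) a - z - a • (0 : EuclideanSpace ℝ (Fin N))
      - a ^ 2 • (0 : EuclideanSpace ℝ (Fin N))) =o[nhds (0:ℝ)] fun a => a ^ 2 := by
    simp only [sub_self, smul_zero, sub_zero]
    exact isLittleO_zero _ _
  have h1 := flow_step hX hφ0 hφ z 1 hone h0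
  have h2 := flow_step hY hψ0 hψ z 1 hone h1
  have h3 := flow_step hX hφ0 hφ z (-1) hnegone h2
  have h4 := flow_step hY hψ0 hψ z (-1) hnegone h3
  have h5 : (fun a : ℝ => ψ (-a, φ (-a, ψ (a, φ (a, z)))) - z
      - a • (0 : EuclideanSpace ℝ (Fin N))
      - a ^ 2 • VectorField.lieBracket ℝ X Y z) =o[nhds (0:ℝ)] fun a => a ^ 2 := by
    refine IsLittleO.congr' (h4.congr_left fun a => ?_) (by rfl) (by rfl)
    simp only [neg_one_mul, one_mul, VectorField.lieBracket, map_add, map_smul, map_zero]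
    module
  have h6 := h5.norm_left
  refine h6.congr_left fun a => ?_
  rw [smul_zero, sub_zero]
end

section
/- Let X, Y : ℝ^N → ℝ^N be vector fields of class C² admitting global flows φ and ψ respectively, fix z ∈ ℝ^N, and define P(a) = ψ(−a, φ(−a, ψ(a, φ(a, z)))). If u : ℝ^N → ℝ is differentiable at z, then u(P(a)) = u(z) + a²·(Du(z))([X,Y](z)) + o(a²) as a → 0. In particular, the increment of u along the four-fold commutator path is governed, to second order in the anisotropic scale, by the Lie derivative of u along the bracket [X,Y]. -/
open Filter Asymptotics

open Set Metric Real

namespace CommutatorPathAux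

variable {E : Type*} [NormedAddCommGroup E] [NormedSpace ℝ E]

/-- Pointwise second-order Taylor expansion for a curve whose derivative has a
derivative at `0`. -/
lemma taylor2 {f d : ℝ → E} {v : E}
    (hf : ∀ t, HasDerivAt f (d t) t) (hd : HasDerivAt d v 0) :
    (fun s : ℝ => f s - f 0 - s • d 0 - (s ^ 2 / 2) • v) =o[nhds (0 : ℝ)] fun s => s ^ 2 := by
  have hg' : ∀ s : ℝ, HasDerivAt (fun s : ℝ => f s - f 0 - s • d 0 - (s ^ 2 / 2) • v)
      (d s - d 0 - s • v) s := by
    intro s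
    have h1 : HasDerivAt (fun x : ℝ => x • d 0) ((1 : ℝ) • d 0) s :=
      (hasDerivAt_id s).smul_const (d 0)
    have h2 : HasDerivAt (fun x : ℝ => (x ^ 2 / 2) • v) ((2 * s ^ 1 / 2) • v) s :=
      ((hasDerivAt_pow 2 s).div_const 2).smul_const v
    have h2' : (2 * s ^ 1 / 2 : ℝ) = s := by ring
    rw [h2'] at h2
    rw [one_smul] at h1
    exact (((hf s).sub_const (f 0)).sub h1).sub h2
  have hlo : (fun s : ℝ => d s - d 0 - s • v) =o[nhds (0 : ℝ)] fun s => s := by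
    simpa using hasDerivAt_iff_isLittleO.1 hd
  rw [isLittleO_iff] at hlo ⊢
  intro c hc
  have hev := hlo hc
  rw [Metric.eventually_nhds_iff] at hev ⊢
  obtain ⟨δ, hδ, hb⟩ := hev
  refine ⟨δ, hδ, fun s hs => ?_⟩
  have hsδ : |s| < δ := by simpa [Real.dist_eq] using hs
  have key : ∀ t ∈ uIcc (0 : ℝ) s, ‖d t - d 0 - t • v‖ ≤ c * |s| := by
    intro t ht
    have h1 : |t| ≤ |s| := by
      rcases Set.mem_uIcc.1 ht with h | h <;> rw [abs_le] <;>
        constructor <;> [skip; skip; skip; skip] <;>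
        first
          | linarith [le_abs_self s, neg_abs_le s, h.1, h.2]
    have h2 : dist t 0 < δ := by
      rw [Real.dist_eq, sub_zero]; exact lt_of_le_of_lt h1 hsδ
    calc ‖d t - d 0 - t • v‖ ≤ c * ‖t‖ := hb h2
      _ ≤ c * |s| := by
        rw [Real.norm_eq_abs]; exact mul_le_mul_of_nonneg_left h1 hc.le
  have hmv := Convex.norm_image_sub_le_of_norm_hasDerivWithin_le
      (f := fun s : ℝ => f s - f 0 - s • d 0 - (s ^ 2 / 2) • v)
      (f' := fun s : ℝ => d s - d 0 - s • v)
      (fun t _ => (hg' t).hasDerivWithinAt) key (convex_uIcc 0 s)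
      (left_mem_uIcc) (right_mem_uIcc)
  rw [show f 0 - f 0 - (0:ℝ) • d 0 - ((0:ℝ) ^ 2 / 2) • v = 0 by simp, sub_zero] at hmv
  calc ‖f s - f 0 - s • d 0 - (s ^ 2 / 2) • v‖ ≤ c * |s| * ‖s - 0‖ := hmv
    _ = c * ‖s ^ 2‖ := by
      rw [sub_zero, Real.norm_eq_abs, Real.norm_eq_abs, abs_pow]
      ring
  
/-- Confinement: a trajectory of a vector field bounded by `M` on `closedBall z r`
which starts within `r/3` of `z` stays in the ball for times up to `r/(3M)`. -/
lemma confine {W : E → E} {z : E} {M r : ℝ} (hr : 0 < r)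
    (hM : ∀ x ∈ closedBall z r, ‖W x‖ ≤ M)
    {f : ℝ → E} (hf : ∀ t, HasDerivAt f (W (f t)) t)
    (h0 : ‖f 0 - z‖ ≤ r / 3) {s : ℝ} (hs0 : 0 ≤ s) (hsM : M * s ≤ r / 3) :
    ∀ t ∈ Icc 0 s, f t ∈ closedBall z r := by
  have hM0 : 0 ≤ M := le_trans (norm_nonneg _) (hM z (mem_closedBall_self hr.le))
  by_contra hcon
  push_neg at hcon
  obtain ⟨t₁, ht₁, ht₁'⟩ := hcon
  have hfc : Continuous f := continuous_iff_continuousAt.2 fun t => (hf t).continuousAt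
  set B : Set ℝ := Icc 0 s ∩ {t | r ≤ dist (f t) z} with hBdef
  have hBne : B.Nonempty :=
    ⟨t₁, ht₁, le_of_lt (by simpa [Metric.mem_closedBall, not_le] using ht₁')⟩
  have hBc : IsClosed B :=
    isClosed_Icc.inter (isClosed_le continuous_const ((hfc.dist continuous_const)))
  have hbdd : BddBelow B := ⟨0, fun t ht => ht.1.1⟩
  set t₀ := sInf B with ht₀def
  have ht₀B : t₀ ∈ B := hBc.csInf_mem hBne hbdd
  have ht₀0 : 0 < t₀ := by
    rcases lt_or_ge 0 t₀ with h | h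
    · exact h
    · exfalso
      have h0' : t₀ = 0 := le_antisymm h ht₀B.1.1
      have := ht₀B.2
      rw [h0', Set.mem_setOf_eq, dist_eq_norm] at this
      linarith
  have hball : ∀ t ∈ Ico 0 t₀, ‖W (f t)‖ ≤ M := by
    intro t ht
    apply hM
    rw [Metric.mem_closedBall]
    by_contra hgt
    push_neg at hgt
    have htB : t ∈ B := ⟨⟨ht.1, le_trans ht.2.le ht₀B.1.2⟩, hgt.le⟩
    exact absurd (csInf_le hbdd htB) (not_le.2 ht.2)
  have hineq := norm_image_sub_le_of_norm_deriv_le_segment'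
      (f := f) (f' := fun t => W (f t)) (a := 0) (b := t₀)
      (fun t _ => (hf t).hasDerivWithinAt) hball t₀ ⟨ht₀0.le, le_refl _⟩
  have h1 : ‖f t₀ - f 0‖ ≤ M * s := by
    calc ‖f t₀ - f 0‖ ≤ M * (t₀ - 0) := hineq
      _ ≤ M * s := by
        rw [sub_zero]; exact mul_le_mul_of_nonneg_left ht₀B.1.2 hM0
  have h2 : r ≤ dist (f t₀) z := ht₀B.2
  have h3 : dist (f t₀) z ≤ ‖f t₀ - f 0‖ + ‖f 0 - z‖ := by
    calc dist (f t₀) z ≤ dist (f t₀) (f 0) + dist (f 0) z := dist_triangle _ _ _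
      _ = ‖f t₀ - f 0‖ + ‖f 0 - z‖ := by rw [dist_eq_norm, dist_eq_norm]
  linarith

lemma gron_le {K ε s : ℝ} (hK : 0 ≤ K) (hs : 0 ≤ s) (hε : 0 ≤ ε) :
    gronwallBound 0 K ε s ≤ ε * (s * Real.exp (K * s)) := by
  rcases eq_or_ne K 0 with h | h
  · rw [h, gronwallBound_K0]
    simp only [zero_mul, Real.exp_zero, mul_one, zero_add]
    exact le_refl _
  · rw [gronwallBound_of_K_ne_0 h]
    have hK' : 0 < K := lt_of_le_of_ne hK (Ne.symm h)
    have h1 : Real.exp (K * s) - 1 ≤ K * s * Real.exp (K * s) := by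
      have ha := Real.add_one_le_exp (-(K * s))
      have h2 : Real.exp (-(K * s)) * Real.exp (K * s) = 1 := by
        rw [← Real.exp_add]; simp
      nlinarith [Real.exp_pos (K * s), mul_le_mul_of_nonneg_right ha (Real.exp_pos (K * s)).le]
    calc 0 * Real.exp (K * s) + ε / K * (Real.exp (K * s) - 1)
        = ε / K * (Real.exp (K * s) - 1) := by ring
      _ ≤ ε / K * (K * s * Real.exp (K * s)) :=
          mul_le_mul_of_nonneg_left h1 (by positivity)
      _ = ε * (s * Real.exp (K * s)) := by field_simp

/-- Refined comparison of two trajectories of the same vector field. -/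
lemma compare {W : E → E} {z : E} {r eps : ℝ} {L : NNReal}
    (hW : Differentiable ℝ W)
    (hL : LipschitzOnWith L W (closedBall z r))
    (heps : ∀ x ∈ closedBall z r, ‖fderiv ℝ W x - fderiv ℝ W z‖ ≤ eps)
    (heps0 : 0 ≤ eps)
    {f g : ℝ → E} (hf : ∀ t, HasDerivAt f (W (f t)) t) (hg : ∀ t, HasDerivAt g (W (g t)) t)
    (hg0 : g 0 = z) {s : ℝ} (hs : 0 ≤ s)
    (hfb : ∀ t ∈ Icc 0 s, f t ∈ closedBall z r) (hgb : ∀ t ∈ Icc 0 s, g t ∈ closedBall z r) :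
    ‖f s - g s - (f 0 - z) - s • (fderiv ℝ W z) (f 0 - z)‖ ≤
      (eps * Real.exp (L * s) + s * ‖fderiv ℝ W z‖ ^ 2) * ‖f 0 - z‖
        * (s * Real.exp (‖fderiv ℝ W z‖ * s)) := by
  set A := fderiv ℝ W z with hA
  set K := ‖A‖ with hK
  set δ := ‖f 0 - z‖ with hδ
  have hδ0 : 0 ≤ δ := norm_nonneg _
  have hfg : ∀ t, HasDerivAt (fun t => f t - g t) (W (f t) - W (g t)) t :=
    fun t => (hf t).sub (hg t)
  -- First Gronwall estimate
  have hcmp : ∀ t ∈ Icc 0 s, ‖f t - g t‖ ≤ δ * Real.exp (L * t) := by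
    intro t ht
    have := norm_le_gronwallBound_of_norm_deriv_right_le (f := fun t => f t - g t)
        (f' := fun t => W (f t) - W (g t)) (δ := δ) (K := L) (ε := 0) (a := 0) (b := s)
        (Continuous.continuousOn (by exact (continuous_iff_continuousAt.2 fun t => (hf t).continuousAt).sub (continuous_iff_continuousAt.2 fun t => (hg t).continuousAt)))
        (fun x _ => (hfg x).hasDerivWithinAt)
        (by simp only [hg0]; exact le_refl _)
        (fun x hx => by
          have := hL.dist_le_mul (f x) (hfb x (Ico_subset_Icc_self hx))
            (g x) (hgb x (Ico_subset_Icc_self hx))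
          rw [dist_eq_norm, dist_eq_norm] at this
          simpa using this)
        t ht
    simpa [gronwallBound_ε0] using this
  have hcmp' : ∀ t ∈ Icc 0 s, ‖f t - g t‖ ≤ δ * Real.exp (L * s) := by
    intro t ht
    refine le_trans (hcmp t ht) ?_
    exact mul_le_mul_of_nonneg_left (Real.exp_le_exp.2
      (mul_le_mul_of_nonneg_left ht.2 L.coe_nonneg)) hδ0
  -- second Gronwall estimate for the refined difference
  set k : ℝ → E := fun t => f t - g t - (f 0 - z) - t • A (f 0 - z) with hk
  have hk' : ∀ t, HasDerivAt k (W (f t) - W (g t) - A (f 0 - z)) t := by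
    intro t
    have h1 : HasDerivAt (fun t : ℝ => t • A (f 0 - z)) ((1 : ℝ) • A (f 0 - z)) t :=
      (hasDerivAt_id t).smul_const _
    have h2 := ((hfg t).sub_const (f 0 - z)).sub h1
    rw [one_smul] at h2
    exact h2
  set C : ℝ := eps * δ * Real.exp (L * s) + s * K ^ 2 * δ with hC
  have hbound : ∀ t ∈ Ico 0 s, ‖W (f t) - W (g t) - A (f 0 - z)‖ ≤ K * ‖k t‖ + C := by
    intro t ht
    have htIcc : t ∈ Icc 0 s := Ico_subset_Icc_self ht
    have hmv : ‖W (f t) - W (g t) - A (f t - g t)‖ ≤ eps * ‖f t - g t‖ :=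
      Convex.norm_image_sub_le_of_norm_hasFDerivWithin_le'
        (fun x _ => (hW x).hasFDerivAt.hasFDerivWithinAt) heps (convex_closedBall z r)
        (hgb t htIcc) (hfb t htIcc)
    have hsplit : W (f t) - W (g t) - A (f 0 - z)
        = (W (f t) - W (g t) - A (f t - g t)) + A (k t) + t • A (A (f 0 - z)) := by
      simp only [hk, map_sub, map_smul]
      abel
    rw [hsplit]
    have h2 : ‖A (k t)‖ ≤ K * ‖k t‖ := A.le_opNorm _
    have h3 : ‖t • A (A (f 0 - z))‖ ≤ s * K ^ 2 * δ := by
      rw [norm_smul, Real.norm_eq_abs, abs_of_nonneg ht.1]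
      calc t * ‖A (A (f 0 - z))‖ ≤ s * (K * (K * δ)) := by
            apply mul_le_mul ht.2.le ?_ (norm_nonneg _) hs
            exact le_trans (A.le_opNorm _)
              (mul_le_mul_of_nonneg_left (A.le_opNorm _) (norm_nonneg _))
        _ = s * K ^ 2 * δ := by ring
    calc ‖W (f t) - W (g t) - A (f t - g t) + A (k t) + t • A (A (f 0 - z))‖
        ≤ ‖W (f t) - W (g t) - A (f t - g t) + A (k t)‖ + ‖t • A (A (f 0 - z))‖ :=
          norm_add_le _ _
      _ ≤ (‖W (f t) - W (g t) - A (f t - g t)‖ + ‖A (k t)‖) + ‖t • A (A (f 0 - z))‖ := by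
          gcongr
          exact norm_add_le _ _
      _ ≤ (eps * ‖f t - g t‖ + K * ‖k t‖) + s * K ^ 2 * δ := by gcongr
      _ ≤ (eps * (δ * Real.exp (L * s)) + K * ‖k t‖) + s * K ^ 2 * δ := by
          gcongr
          exact hcmp' t htIcc
      _ = K * ‖k t‖ + C := by rw [hC]; ring
  have hkbound := norm_le_gronwallBound_of_norm_deriv_right_le (f := k)
      (f' := fun t => W (f t) - W (g t) - A (f 0 - z)) (δ := 0) (K := K) (ε := C) (a := 0) (b := s)
      (Continuous.continuousOn (by exact continuous_iff_continuousAt.2 fun t => (hk' t).continuousAt))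
      (fun x _ => (hk' x).hasDerivWithinAt)
      (by simp [hk, hg0]) hbound s ⟨hs, le_refl _⟩
  have hCpos : 0 ≤ C := by
    have hE : (0:ℝ) < Real.exp (L * s) := Real.exp_pos _
    have h1 : 0 ≤ eps * δ * Real.exp (L * s) :=
      mul_nonneg (mul_nonneg heps0 hδ0) hE.le
    have h2 : 0 ≤ s * K ^ 2 * δ := mul_nonneg (mul_nonneg hs (sq_nonneg _)) hδ0
    rw [hC]
    linarith
  calc ‖f s - g s - (f 0 - z) - s • A (f 0 - z)‖ = ‖k s‖ := rfl
    _ ≤ gronwallBound 0 K C (s - 0) := hkbound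
    _ ≤ C * (s * Real.exp (K * s)) := by
        rw [sub_zero]; exact gron_le (norm_nonneg _) hs hCpos
    _ = (eps * Real.exp (L * s) + s * K ^ 2) * δ * (s * Real.exp (K * s)) := by
        rw [hC]; ring

/-- Second-order Taylor expansion of a flow in time at a fixed point. -/
lemma base_taylor {W : E → E} (hW : Differentiable ℝ W) {θ : ℝ × E → E}
    (hθ0 : ∀ p, θ (0, p) = p)
    (hθ : ∀ (a : ℝ) (p : E), HasDerivAt (fun t => θ (t, p)) (W (θ (a, p))) a) (z : E) :
    (fun s => θ (s, z) - z - s • W z - (s ^ 2 / 2) • (fderiv ℝ W z (W z)))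
      =o[nhds (0 : ℝ)] fun s => s ^ 2 := by
  have hd : HasDerivAt (fun t => W (θ (t, z))) (fderiv ℝ W z (W z)) 0 := by
    have h0 := hθ 0 z
    have h1 := ((hW (θ (0, z))).hasFDerivAt.comp_hasDerivAt 0 h0)
    simpa [hθ0, Function.comp_def] using h1
  have h := taylor2 (f := fun t => θ (t, z)) (d := fun t => W (θ (t, z)))
    (v := fderiv ℝ W z (W z)) (fun t => hθ t z) hd
  simpa [hθ0] using h

set_option maxHeartbeats 1000000 in
/-- Comparison of a flow applied to a moving point with the flow from `z`,
to second order in the time parameter. -/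
lemma stage {W : E → E} (hW : ContDiff ℝ 1 W) {θ : ℝ × E → E}
    (hθ0 : ∀ p, θ (0, p) = p)
    (hθ : ∀ (a : ℝ) (p : E), HasDerivAt (fun t => θ (t, p)) (W (θ (a, p))) a)
    (z : E) {c : ℝ → E} (hc : (fun a => c a - z) =O[nhdsWithin (0:ℝ) (Ici 0)] fun a => a) :
    (fun a => θ (a, c a) - θ (a, z) - (c a - z) - a • (fderiv ℝ W z) (c a - z))
      =o[nhdsWithin (0:ℝ) (Ici 0)] fun a => a ^ 2 := by
  set l := nhdsWithin (0:ℝ) (Ici 0) with hl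
  set A := fderiv ℝ W z with hA
  set K := ‖A‖ with hKdef
  -- Lipschitz constant near z
  obtain ⟨L, t, htmem, hLip⟩ := hW.contDiffAt.exists_lipschitzOnWith (x := z)
  obtain ⟨r₀, hr₀, hball⟩ := Metric.mem_nhds_iff.1 htmem
  have hsub1 : closedBall z (r₀ / 2) ⊆ t :=
    le_trans (closedBall_subset_ball (by linarith)) hball
  have hLip₁ : LipschitzOnWith L W (closedBall z (r₀ / 2)) := hLip.mono hsub1
  set M : ℝ := ‖W z‖ + L * (r₀ / 2) with hM
  have hM0 : 0 ≤ M := by positivity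
  have hMb : ∀ x ∈ closedBall z (r₀ / 2), ‖W x‖ ≤ M := by
    intro x hx
    have h1 := hLip₁.dist_le_mul x hx z (mem_closedBall_self (by linarith))
    rw [dist_eq_norm, dist_eq_norm] at h1
    have h2 : ‖x - z‖ ≤ r₀ / 2 := by
      rw [← dist_eq_norm]; exact mem_closedBall.1 hx
    calc ‖W x‖ ≤ ‖W x - W z‖ + ‖W z‖ := by
          simpa using norm_add_le (W x - W z) (W z)
      _ ≤ L * (r₀ / 2) + ‖W z‖ := by
          gcongr
          exact le_trans h1 (mul_le_mul_of_nonneg_left h2 L.coe_nonneg)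
      _ = M := by rw [hM]; ring
  have hfdc : ContinuousAt (fderiv ℝ W) z := (hW.continuous_fderiv one_ne_zero).continuousAt
  rw [isLittleO_iff]
  intro C hC
  obtain ⟨C₁, hC₁, hbig⟩ := hc.exists_pos
  have hbig' := hbig.bound
  set eps : ℝ := C / (2 * C₁ * Real.exp L * Real.exp K) with heps_def
  have heps_pos : 0 < eps := by
    apply div_pos hC
    positivity
  -- choose a radius where the derivative of W is eps-close to A
  have hev : ∀ᶠ x in nhds z, ‖fderiv ℝ W x - A‖ ≤ eps := by
    have h1 := Metric.tendsto_nhds.1 hfdc eps heps_pos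
    filter_upwards [h1] with x hx
    rw [dist_eq_norm] at hx
    exact hx.le
  obtain ⟨r₂, hr₂, hr₂b⟩ := Metric.eventually_nhds_iff.1 hev
  set r : ℝ := min (r₀ / 2) (r₂ / 2) with hr_def
  have hr : 0 < r := lt_min (by linarith) (by linarith)
  have hsubr : closedBall z r ⊆ closedBall z (r₀ / 2) :=
    closedBall_subset_closedBall (min_le_left _ _)
  have hLipr : LipschitzOnWith L W (closedBall z r) := hLip₁.mono hsubr
  have hMr : ∀ x ∈ closedBall z r, ‖W x‖ ≤ M := fun x hx => hMb x (hsubr hx)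
  have hepsr : ∀ x ∈ closedBall z r, ‖fderiv ℝ W x - A‖ ≤ eps := by
    intro x hx
    apply hr₂b
    calc dist x z ≤ r := mem_closedBall.1 hx
      _ < r₂ := lt_of_le_of_lt (min_le_right _ _) (by linarith)
  -- eventual bounds on a
  have hev_le : ∀ {b : ℝ}, 0 < b → ∀ᶠ a in l, a ≤ b := by
    intro b hb
    apply eventually_nhdsWithin_of_eventually_nhds
    filter_upwards [Iio_mem_nhds hb] with a ha
    exact le_of_lt ha
  have hev0 : ∀ᶠ a in l, 0 ≤ a := eventually_mem_nhdsWithin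
  filter_upwards [hev0, hbig', hev_le one_pos, hev_le (show (0:ℝ) < r / (3 * (M + 1)) by positivity),
    hev_le (show (0:ℝ) < r / (3 * C₁) by positivity),
    hev_le (show (0:ℝ) < C / (2 * (K ^ 2 * C₁ * Real.exp K + 1)) by positivity)]
    with a ha0 haC ha1 ha2 ha3 ha4
  have hca : ‖c a - z‖ ≤ C₁ * a := by
    calc ‖c a - z‖ ≤ C₁ * ‖a‖ := haC
      _ = C₁ * a := by rw [Real.norm_eq_abs, abs_of_nonneg ha0]
  have hca3 : ‖c a - z‖ ≤ r / 3 := by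
    calc ‖c a - z‖ ≤ C₁ * a := hca
      _ ≤ C₁ * (r / (3 * C₁)) := mul_le_mul_of_nonneg_left ha3 hC₁.le
      _ = r / 3 := by field_simp
  have hMa : M * a ≤ r / 3 := by
    calc M * a ≤ (M + 1) * (r / (3 * (M + 1))) := by
          apply mul_le_mul (by linarith) ha2 ha0 (by linarith)
      _ = r / 3 := by field_simp
  -- the two trajectories
  have hfder : ∀ t, HasDerivAt (fun t' => θ (t', c a)) (W (θ (t, c a))) t := fun t => hθ t (c a)
  have hgder : ∀ t, HasDerivAt (fun t' => θ (t', z)) (W (θ (t, z))) t := fun t => hθ t z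
  have hf0 : θ (0, c a) = c a := hθ0 (c a)
  have hg0 : θ (0, z) = z := hθ0 z
  have hfb : ∀ t ∈ Icc 0 a, θ (t, c a) ∈ closedBall z r :=
    confine hr hMr hfder (by rw [hf0]; exact hca3) ha0 hMa
  have hgb : ∀ t ∈ Icc 0 a, θ (t, z) ∈ closedBall z r :=
    confine hr hMr hgder (by rw [hg0]; simp only [sub_self, norm_zero]; positivity) ha0 hMa
  have hcmp := compare (hW.differentiable one_ne_zero) hLipr hepsr heps_pos.le
    hfder hgder hg0 ha0 hfb hgb
  rw [hf0] at hcmp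
  -- final arithmetic
  have e1 : Real.exp ((L:ℝ) * a) ≤ Real.exp L := by
    apply Real.exp_le_exp.2
    nlinarith [L.coe_nonneg]
  have e2 : Real.exp (K * a) ≤ Real.exp K := by
    apply Real.exp_le_exp.2
    nlinarith [norm_nonneg A]
  have hstep : (eps * Real.exp ((L:ℝ) * a) + a * K ^ 2) * ‖c a - z‖
        * (a * Real.exp (K * a))
      ≤ (eps * Real.exp L + a * K ^ 2) * (C₁ * a) * (a * Real.exp K) := by
    have hP2 : 0 ≤ eps * Real.exp (L:ℝ) + a * K ^ 2 := by positivity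
    apply mul_le_mul _ (mul_le_mul_of_nonneg_left e2 ha0)
      (mul_nonneg ha0 (Real.exp_pos _).le)
      (mul_nonneg hP2 (mul_nonneg hC₁.le ha0))
    exact mul_le_mul (add_le_add_left (mul_le_mul_of_nonneg_left e1 heps_pos.le) _)
      hca (norm_nonneg _) hP2
  have hexpand : (eps * Real.exp L + a * K ^ 2) * (C₁ * a) * (a * Real.exp K)
      = C / 2 * a ^ 2 + (K ^ 2 * C₁ * Real.exp K * a) * a ^ 2 := by
    rw [heps_def]
    field_simp
  have hsmall : (K ^ 2 * C₁ * Real.exp K * a) ≤ C / 2 := by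
    have hXv0 : (0:ℝ) ≤ K ^ 2 * C₁ * Real.exp K := by positivity
    have h4 : a * (2 * (K ^ 2 * C₁ * Real.exp K + 1)) ≤ C :=
      (le_div_iff₀ (by positivity)).1 ha4
    nlinarith
  calc ‖θ (a, c a) - θ (a, z) - (c a - z) - a • A (c a - z)‖
      ≤ (eps * Real.exp ((L:ℝ) * a) + a * K ^ 2) * ‖c a - z‖ * (a * Real.exp (K * a)) := hcmp
    _ ≤ (eps * Real.exp L + a * K ^ 2) * (C₁ * a) * (a * Real.exp K) := hstep
    _ = C / 2 * a ^ 2 + (K ^ 2 * C₁ * Real.exp K * a) * a ^ 2 := hexpand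
    _ ≤ C / 2 * a ^ 2 + C / 2 * a ^ 2 := by
        have := sq_nonneg a
        nlinarith [hsmall, sq_nonneg a]
    _ = C * a ^ 2 := by ring
    _ = C * ‖a ^ 2‖ := by rw [Real.norm_eq_abs, abs_of_nonneg (sq_nonneg a)]

set_option maxHeartbeats 1000000 in
/-- The one-sided (a → 0⁺) expansion of the commutator path. -/
lemma one_sided {X Y : E → E} (hX : ContDiff ℝ 1 X) (hY : ContDiff ℝ 1 Y)
    {φ ψ : ℝ × E → E}
    (hφ0 : ∀ p, φ (0, p) = p)
    (hφ : ∀ (a : ℝ) (p : E), HasDerivAt (fun t => φ (t, p)) (X (φ (a, p))) a)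
    (hψ0 : ∀ p, ψ (0, p) = p)
    (hψ : ∀ (a : ℝ) (p : E), HasDerivAt (fun t => ψ (t, p)) (Y (ψ (a, p))) a)
    (z : E) :
    (fun a => ψ (-a, φ (-a, ψ (a, φ (a, z)))) - z
        - a ^ 2 • (fderiv ℝ Y z (X z) - fderiv ℝ X z (Y z)))
      =o[nhdsWithin (0:ℝ) (Ici 0)] fun a => a ^ 2 := by
  have hXd : Differentiable ℝ X := hX.differentiable one_ne_zero
  have hYd : Differentiable ℝ Y := hY.differentiable one_ne_zero
  -- reversed flows
  have hφn0 : ∀ p : E, (fun q : ℝ × E => φ (-q.1, q.2)) (0, p) = p := by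
    intro p
    show φ (-(0:ℝ), p) = p
    rw [neg_zero]; exact hφ0 p
  have hψn0 : ∀ p : E, (fun q : ℝ × E => ψ (-q.1, q.2)) (0, p) = p := by
    intro p
    show ψ (-(0:ℝ), p) = p
    rw [neg_zero]; exact hψ0 p
  have hφn : ∀ (a : ℝ) (p : E), HasDerivAt
      (fun t => (fun q : ℝ × E => φ (-q.1, q.2)) (t, p))
      ((fun x => -X x) ((fun q : ℝ × E => φ (-q.1, q.2)) (a, p))) a := by
    intro a p
    show HasDerivAt (fun t => φ (-t, p)) (-X (φ (-a, p))) a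
    have h := HasDerivAt.scomp (g₁ := fun t => φ (t, p)) (h := fun t : ℝ => -t)
      (x := a) (hφ (-a) p) ((hasDerivAt_id a).neg)
    simpa [Function.comp_def] using h
  have hψn : ∀ (a : ℝ) (p : E), HasDerivAt
      (fun t => (fun q : ℝ × E => ψ (-q.1, q.2)) (t, p))
      ((fun x => -Y x) ((fun q : ℝ × E => ψ (-q.1, q.2)) (a, p))) a := by
    intro a p
    show HasDerivAt (fun t => ψ (-t, p)) (-Y (ψ (-a, p))) a
    have h := HasDerivAt.scomp (g₁ := fun t => ψ (t, p)) (h := fun t : ℝ => -t)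
      (x := a) (hψ (-a) p) ((hasDerivAt_id a).neg)
    simpa [Function.comp_def] using h
  -- asymptotic toolbox on the one-sided filter
  have hOlin : ∀ u : E, (fun a : ℝ => a • u) =O[nhdsWithin (0:ℝ) (Ici 0)] fun a => a :=
    fun u => IsBigO.of_bound ‖u‖ (Eventually.of_forall fun a => le_of_eq (by
      rw [norm_smul, mul_comm]))
  have hOsq : ∀ u : E, (fun a : ℝ => a ^ 2 • u) =O[nhdsWithin (0:ℝ) (Ici 0)] fun a => a ^ 2 :=
    fun u => IsBigO.of_bound ‖u‖ (Eventually.of_forall fun a => le_of_eq (by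
      rw [norm_smul, mul_comm]))
  have hOhalf : ∀ u : E,
      (fun a : ℝ => (a ^ 2 / 2) • u) =O[nhdsWithin (0:ℝ) (Ici 0)] fun a => a ^ 2 :=
    fun u => IsBigO.of_bound ‖u‖ (Eventually.of_forall fun a => by
      rw [norm_smul, Real.norm_eq_abs, Real.norm_eq_abs, abs_div]
      have h2 : |(2:ℝ)| = 2 := by norm_num
      rw [h2]
      nlinarith [abs_nonneg (a ^ 2), norm_nonneg u])
  have hids : Tendsto (fun a : ℝ => a) (nhdsWithin (0:ℝ) (Ici 0)) (nhds 0) :=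
    tendsto_id.mono_right nhdsWithin_le_nhds
  have ho1 : (fun a : ℝ => a) =o[nhdsWithin (0:ℝ) (Ici 0)] fun _ => (1:ℝ) :=
    (isLittleO_one_iff ℝ).2 hids
  have hsq_o : (fun a : ℝ => a ^ 2) =o[nhdsWithin (0:ℝ) (Ici 0)] fun a => a := by
    have h := ho1.mul_isBigO (isBigO_refl (fun a : ℝ => a) _)
    simpa [pow_two] using h
  have hsq_O : (fun a : ℝ => a ^ 2) =O[nhdsWithin (0:ℝ) (Ici 0)] fun a => a := hsq_o.isBigO
  have hcube : ∀ {G : ℝ → E}, (G =O[nhdsWithin (0:ℝ) (Ici 0)] fun a => a ^ 2) →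
      (fun a => a • G a) =o[nhdsWithin (0:ℝ) (Ici 0)] fun a => a ^ 2 := by
    intro G hG
    have h := ho1.smul_isBigO hG
    simpa using h
  -- Stage 1
  have E1 : (fun a => φ (a, z) - z - a • X z - (a ^ 2 / 2) • fderiv ℝ X z (X z))
      =o[nhdsWithin (0:ℝ) (Ici 0)] fun a => a ^ 2 :=
    (base_taylor hXd hφ0 hφ z).mono nhdsWithin_le_nhds
  have T2 : (fun a => ψ (a, z) - z - a • Y z - (a ^ 2 / 2) • fderiv ℝ Y z (Y z))
      =o[nhdsWithin (0:ℝ) (Ici 0)] fun a => a ^ 2 :=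
    (base_taylor hYd hψ0 hψ z).mono nhdsWithin_le_nhds
  have hO1 : (fun a => φ (a, z) - z) =O[nhdsWithin (0:ℝ) (Ici 0)] fun a => a := by
    have h := ((E1.isBigO.trans hsq_O).add (hOlin (X z))).add
      ((hOhalf (fderiv ℝ X z (X z))).trans hsq_O)
    exact h.congr_left fun a => by abel
  -- Stage 2
  have s2 := stage hY hψ0 hψ z hO1
  have lin2 : (fun a => a • fderiv ℝ Y z (φ (a, z) - z) - a ^ 2 • fderiv ℝ Y z (X z))
      =o[nhdsWithin (0:ℝ) (Ici 0)] fun a => a ^ 2 := by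
    have hin : (fun a => φ (a, z) - z - a • X z) =O[nhdsWithin (0:ℝ) (Ici 0)]
        fun a => a ^ 2 :=
      (E1.isBigO.add (hOhalf (fderiv ℝ X z (X z)))).congr_left fun a => by abel
    have h := hcube (((fderiv ℝ Y z).isBigO_comp _ _).trans hin)
    refine h.congr (fun a => ?_) (fun a => rfl)
    simp only [map_sub, map_smul, smul_sub, smul_smul, pow_two]
  have E2 : (fun a => ψ (a, φ (a, z)) - z - a • (X z + Y z)
      - a ^ 2 • ((2⁻¹ : ℝ) • fderiv ℝ X z (X z) + (2⁻¹ : ℝ) • fderiv ℝ Y z (Y z)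
          + fderiv ℝ Y z (X z)))
      =o[nhdsWithin (0:ℝ) (Ici 0)] fun a => a ^ 2 := by
    refine (((s2.add T2).add E1).add lin2).congr (fun a => ?_) (fun a => rfl)
    module
  have hO2 : (fun a => ψ (a, φ (a, z)) - z) =O[nhdsWithin (0:ℝ) (Ici 0)] fun a => a := by
    have h := ((E2.isBigO.trans hsq_O).add (hOlin (X z + Y z))).add
      ((hOsq ((2⁻¹ : ℝ) • fderiv ℝ X z (X z) + (2⁻¹ : ℝ) • fderiv ℝ Y z (Y z)
          + fderiv ℝ Y z (X z))).trans hsq_O)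
    exact h.congr_left fun a => by abel
  -- Stage 3
  have s3 := stage (W := fun x => -X x) (θ := fun q : ℝ × E => φ (-q.1, q.2)) hX.neg hφn0 hφn z hO2
  rw [fderiv_fun_neg] at s3
  have T3raw := (base_taylor (W := fun x => -X x) (θ := fun q : ℝ × E => φ (-q.1, q.2)) hXd.neg hφn0 hφn z).mono
    (nhdsWithin_le_nhds (s := Ici (0:ℝ)))
  rw [fderiv_fun_neg] at T3raw
  have T3 : (fun s : ℝ => φ (-s, z) - z + s • X z - (s ^ 2 / 2) • fderiv ℝ X z (X z))
      =o[nhdsWithin (0:ℝ) (Ici 0)] fun s => s ^ 2 := by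
    refine T3raw.congr (fun s => ?_) (fun s => rfl)
    simp only [ContinuousLinearMap.neg_apply, map_neg, neg_neg, smul_neg, sub_neg_eq_add]
  have lin3 : (fun a => -(a • fderiv ℝ X z (ψ (a, φ (a, z)) - z))
      + a ^ 2 • (fderiv ℝ X z (X z) + fderiv ℝ X z (Y z)))
      =o[nhdsWithin (0:ℝ) (Ici 0)] fun a => a ^ 2 := by
    have hin : (fun a => ψ (a, φ (a, z)) - z - a • (X z + Y z))
        =O[nhdsWithin (0:ℝ) (Ici 0)] fun a => a ^ 2 :=
      (E2.isBigO.add (hOsq _)).congr_left fun a => by abel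
    have h := (hcube (((fderiv ℝ X z).isBigO_comp _ _).trans hin)).neg_left
    refine h.congr (fun a => ?_) (fun a => rfl)
    simp only [map_sub, map_add, map_smul]
    module
  have E3 : (fun a => φ (-a, ψ (a, φ (a, z))) - z - a • Y z
      - a ^ 2 • ((2⁻¹ : ℝ) • fderiv ℝ Y z (Y z) + fderiv ℝ Y z (X z) - fderiv ℝ X z (Y z)))
      =o[nhdsWithin (0:ℝ) (Ici 0)] fun a => a ^ 2 := by
    refine (((s3.add T3).add E2).add lin3).congr (fun a => ?_) (fun a => rfl)
    simp only [ContinuousLinearMap.neg_apply]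
    module
  have hO3 : (fun a => φ (-a, ψ (a, φ (a, z))) - z)
      =O[nhdsWithin (0:ℝ) (Ici 0)] fun a => a := by
    have h := ((E3.isBigO.trans hsq_O).add (hOlin (Y z))).add
      ((hOsq ((2⁻¹ : ℝ) • fderiv ℝ Y z (Y z) + fderiv ℝ Y z (X z)
          - fderiv ℝ X z (Y z))).trans hsq_O)
    exact h.congr_left fun a => by abel
  -- Stage 4
  have s4 := stage (W := fun x => -Y x) (θ := fun q : ℝ × E => ψ (-q.1, q.2)) hY.neg hψn0 hψn z hO3
  rw [fderiv_fun_neg] at s4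
  have T4raw := (base_taylor (W := fun x => -Y x) (θ := fun q : ℝ × E => ψ (-q.1, q.2)) hYd.neg hψn0 hψn z).mono
    (nhdsWithin_le_nhds (s := Ici (0:ℝ)))
  rw [fderiv_fun_neg] at T4raw
  have T4 : (fun s : ℝ => ψ (-s, z) - z + s • Y z - (s ^ 2 / 2) • fderiv ℝ Y z (Y z))
      =o[nhdsWithin (0:ℝ) (Ici 0)] fun s => s ^ 2 := by
    refine T4raw.congr (fun s => ?_) (fun s => rfl)
    simp only [ContinuousLinearMap.neg_apply, map_neg, neg_neg, smul_neg, sub_neg_eq_add]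
  have lin4 : (fun a => -(a • fderiv ℝ Y z (φ (-a, ψ (a, φ (a, z))) - z))
      + a ^ 2 • fderiv ℝ Y z (Y z))
      =o[nhdsWithin (0:ℝ) (Ici 0)] fun a => a ^ 2 := by
    have hin : (fun a => φ (-a, ψ (a, φ (a, z))) - z - a • Y z)
        =O[nhdsWithin (0:ℝ) (Ici 0)] fun a => a ^ 2 :=
      (E3.isBigO.add (hOsq _)).congr_left fun a => by abel
    have h := (hcube (((fderiv ℝ Y z).isBigO_comp _ _).trans hin)).neg_left
    refine h.congr (fun a => ?_) (fun a => rfl)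
    simp only [map_sub, map_smul]
    module
  refine (((s4.add T4).add E3).add lin4).congr (fun a => ?_) (fun a => rfl)
  simp only [ContinuousLinearMap.neg_apply]
  module

end CommutatorPathAux

open CommutatorPathAux

/-- The increment of a differentiable function `u` along the four-fold commutator path is
governed, to second order, by the Lie derivative of `u` along the bracket `[X,Y]`. -/
theorem increment_along_commutator_path {N : ℕ}
    (X Y : EuclideanSpace ℝ (Fin N) → EuclideanSpace ℝ (Fin N))
    (hX : ContDiff ℝ 2 X) (hY : ContDiff ℝ 2 Y)
    (φ ψ : ℝ × EuclideanSpace ℝ (Fin N) → EuclideanSpace ℝ (Fin N))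
    (hφ0 : ∀ p, φ (0, p) = p)
    (hφ : ∀ (a : ℝ) (p : EuclideanSpace ℝ (Fin N)),
      HasDerivAt (fun t => φ (t, p)) (X (φ (a, p))) a)
    (hψ0 : ∀ p, ψ (0, p) = p)
    (hψ : ∀ (a : ℝ) (p : EuclideanSpace ℝ (Fin N)),
      HasDerivAt (fun t => ψ (t, p)) (Y (ψ (a, p))) a)
    (z : EuclideanSpace ℝ (Fin N))
    (u : EuclideanSpace ℝ (Fin N) → ℝ) (hu : DifferentiableAt ℝ u z) :
    (fun a : ℝ => u (ψ (-a, φ (-a, ψ (a, φ (a, z))))) - u z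
        - a ^ 2 * fderiv ℝ u z (VectorField.lieBracket ℝ X Y z))
      =o[nhds (0 : ℝ)] fun a => a ^ 2 := by
  have hX1 : ContDiff ℝ 1 X := hX.of_le one_le_two
  have hY1 : ContDiff ℝ 1 Y := hY.of_le one_le_two
  -- the reversed flows, as flows of `-X` and `-Y`
  have hφn0 : ∀ p : EuclideanSpace ℝ (Fin N), (fun q : ℝ × EuclideanSpace ℝ (Fin N) => φ (-q.1, q.2)) (0, p) = p := by
    intro p
    show φ (-(0:ℝ), p) = p
    rw [neg_zero]; exact hφ0 p
  have hψn0 : ∀ p : EuclideanSpace ℝ (Fin N), (fun q : ℝ × EuclideanSpace ℝ (Fin N) => ψ (-q.1, q.2)) (0, p) = p := by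
    intro p
    show ψ (-(0:ℝ), p) = p
    rw [neg_zero]; exact hψ0 p
  have hφn : ∀ (a : ℝ) (p : EuclideanSpace ℝ (Fin N)), HasDerivAt
      (fun t => (fun q : ℝ × EuclideanSpace ℝ (Fin N) => φ (-q.1, q.2)) (t, p))
      ((fun x => -X x) ((fun q : ℝ × EuclideanSpace ℝ (Fin N) => φ (-q.1, q.2)) (a, p))) a := by
    intro a p
    show HasDerivAt (fun t => φ (-t, p)) (-X (φ (-a, p))) a
    have h := HasDerivAt.scomp (g₁ := fun t => φ (t, p)) (h := fun t : ℝ => -t)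
      (x := a) (hφ (-a) p) ((hasDerivAt_id a).neg)
    simpa [Function.comp_def] using h
  have hψn : ∀ (a : ℝ) (p : EuclideanSpace ℝ (Fin N)), HasDerivAt
      (fun t => (fun q : ℝ × EuclideanSpace ℝ (Fin N) => ψ (-q.1, q.2)) (t, p))
      ((fun x => -Y x) ((fun q : ℝ × EuclideanSpace ℝ (Fin N) => ψ (-q.1, q.2)) (a, p))) a := by
    intro a p
    show HasDerivAt (fun t => ψ (-t, p)) (-Y (ψ (-a, p))) a
    have h := HasDerivAt.scomp (g₁ := fun t => ψ (t, p)) (h := fun t : ℝ => -t)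
      (x := a) (hψ (-a) p) ((hasDerivAt_id a).neg)
    simpa [Function.comp_def] using h
  -- positive side
  have hpos := one_sided hX1 hY1 hφ0 hφ hψ0 hψ z
  -- negative side, via the reversed flows
  have hneg0 := one_sided (X := fun x => -X x) (Y := fun x => -Y x)
    (φ := fun q : ℝ × EuclideanSpace ℝ (Fin N) => φ (-q.1, q.2)) (ψ := fun q : ℝ × EuclideanSpace ℝ (Fin N) => ψ (-q.1, q.2))
    hX1.neg hY1.neg hφn0 hφn hψn0 hψn z
  simp only [fderiv_fun_neg, ContinuousLinearMap.neg_apply, map_neg, neg_neg] at hneg0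
  have hmapneg : Tendsto (fun a : ℝ => -a) (nhdsWithin (0:ℝ) (Iic 0))
      (nhdsWithin (0:ℝ) (Ici 0)) := by
    have h1 : Tendsto (fun a : ℝ => -a) (nhds (0:ℝ)) (nhds (0:ℝ)) := by
      simpa using (continuous_neg.tendsto (0:ℝ))
    have h2 : Tendsto (fun a : ℝ => -a) (Filter.principal (Iic (0:ℝ)))
        (Filter.principal (Ici (0:ℝ))) :=
      tendsto_principal_principal.2 fun a ha => by simpa using neg_nonneg.2 (mem_Iic.1 ha)
    exact h1.inf h2
  have hneg1 := hneg0.comp_tendsto hmapneg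
  simp only [Function.comp_def] at hneg1
  have hneg : (fun a : ℝ => ψ (-a, φ (-a, ψ (a, φ (a, z)))) - z
      - a ^ 2 • (fderiv ℝ Y z (X z) - fderiv ℝ X z (Y z)))
      =o[nhdsWithin (0:ℝ) (Iic 0)] fun a => a ^ 2 := by
    refine hneg1.congr (fun a => ?_) (fun a => ?_)
    · simp [neg_neg, neg_sq]
    · simp [neg_sq]
  have hpath : (fun a : ℝ => ψ (-a, φ (-a, ψ (a, φ (a, z)))) - z
      - a ^ 2 • (fderiv ℝ Y z (X z) - fderiv ℝ X z (Y z)))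
      =o[nhds (0:ℝ)] fun a => a ^ 2 := by
    rw [← nhdsLE_sup_nhdsGE (0:ℝ)]
    exact hneg.sup hpos
  -- compose with u
  have hOsq : ∀ u' : EuclideanSpace ℝ (Fin N), (fun a : ℝ => a ^ 2 • u') =O[nhds (0:ℝ)] fun a => a ^ 2 :=
    fun u' => IsBigO.of_bound ‖u'‖ (Eventually.of_forall fun a => le_of_eq (by
      rw [norm_smul, mul_comm]))
  have hO4 : (fun a : ℝ => ψ (-a, φ (-a, ψ (a, φ (a, z)))) - z)
      =O[nhds (0:ℝ)] fun a => a ^ 2 := by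
    have h := hpath.isBigO.add (hOsq (fderiv ℝ Y z (X z) - fderiv ℝ X z (Y z)))
    exact h.congr_left fun a => by abel
  have htend0 : Tendsto (fun a : ℝ => ψ (-a, φ (-a, ψ (a, φ (a, z)))) - z)
      (nhds (0:ℝ)) (nhds 0) :=
    hO4.trans_tendsto ((continuous_pow 2).tendsto' (0:ℝ) 0 (by norm_num))
  have htend : Tendsto (fun a : ℝ => ψ (-a, φ (-a, ψ (a, φ (a, z)))))
      (nhds (0:ℝ)) (nhds z) := by
    have h := htend0.add_const z
    simpa using h
  have hder := (hu.hasFDerivAt.isLittleO).comp_tendsto htend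
  simp only [Function.comp_def] at hder
  have h1 := hder.trans_isBigO hO4
  have h2 : (fun a : ℝ => fderiv ℝ u z (ψ (-a, φ (-a, ψ (a, φ (a, z)))) - z)
      - a ^ 2 * fderiv ℝ u z (fderiv ℝ Y z (X z) - fderiv ℝ X z (Y z)))
      =o[nhds (0:ℝ)] fun a => a ^ 2 := by
    have h := ((fderiv ℝ u z).isBigO_comp _ _).trans_isLittleO hpath
    refine h.congr (fun a => ?_) (fun a => rfl)
    simp [map_sub, map_smul, smul_eq_mul]
  have hD : VectorField.lieBracket ℝ X Y z
      = fderiv ℝ Y z (X z) - fderiv ℝ X z (Y z) := rfl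
  rw [hD]
  refine (h1.add h2).congr (fun a => ?_) (fun a => rfl)
  ring
end

section
/- Let Y₀, Y₁, …, Yₙ : ℝ^N → ℝ^N be C¹ vector fields admitting global flows φ₀, φ₁, …, φₙ (φᵢ(0,p) = p and ∂ₐφᵢ(a,p) = Yᵢ(φᵢ(a,p)) for all a, p). Fix z ∈ ℝ^N and define E : ℝ^{n+1} → ℝ^N by E(h₀, …, hₙ) = φₙ(hₙ, φ_{n−1}(h_{n−1}, …, φ₀(h₀, z) …)). Then E is differentiable at h = 0 and its differential at 0 is the linear map (h₀, …, hₙ) ↦ Σ_{i=0}^{n} hᵢ·Yᵢ(z). In particular, if n + 1 = N and Y₀(z), …, Yₙ(z) form a basis of ℝ^N, the differential of E at 0 is invertible. (This is the statement that the Jacobian of the exponential-type coordinate map E_I at the base point is the identity with respect to the chosen basis of vector fields.) -/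
open Filter


open Filter Set Metric

variable {E : Type*} [NormedAddCommGroup E] [NormedSpace ℝ E]

/-- a priori bound on a curve with derivative bounded while in a ball -/
lemma curve_bound (f : ℝ → E) (v : ℝ → E) (hf : ∀ s, HasDerivAt f (v s) s)
    (z : E) (M : ℝ) (hM : 0 ≤ M)
    (hv : ∀ s, dist (f s) z ≤ 1 → ‖v s‖ ≤ M)
    (hp : dist (f 0) z ≤ 1/2)
    {t : ℝ} (ht : 0 ≤ t) (ht' : (M+1) * t ≤ 1/2) :
    ∀ u ∈ Set.Icc 0 t, ‖f u - f 0‖ ≤ (M+1) * u := by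
  have hfc : Continuous f := by
    refine continuous_iff_continuousAt.2 fun s => (hf s).continuousAt
  have hs : IsClosed ({u : ℝ | ‖f u - f 0‖ ≤ (M+1) * u} ∩ Icc 0 t) :=
    (isClosed_le (by fun_prop) (by fun_prop)).inter isClosed_Icc
  refine fun u hu => hs.Icc_subset_of_forall_exists_gt ?_ ?_ hu
  · simp
  · rintro x ⟨hx, hx0, hxt⟩ y hy
    have hxball : dist (f x) z ≤ 1 := by
      have h1 : ‖f x - f 0‖ ≤ 1/2 := by
        refine hx.trans (le_trans ?_ ht')
        have := hxt.le
        nlinarith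
      calc dist (f x) z ≤ dist (f x) (f 0) + dist (f 0) z := dist_triangle _ _ _
        _ ≤ 1/2 + 1/2 := add_le_add (by rwa [dist_eq_norm]) hp
        _ = 1 := by norm_num
    have hvx : ‖v x‖ ≤ M := hv x hxball
    have hslope := hasDerivAt_iff_tendsto_slope.1 (hf x)
    have hev : ∀ᶠ u in nhdsWithin x {x}ᶜ, slope f x u ∈ Metric.ball (v x) 1 :=
      hslope (Metric.ball_mem_nhds _ one_pos)
    rw [eventually_nhdsWithin_iff] at hev
    rw [Metric.eventually_nhds_iff] at hev
    obtain ⟨δ, hδ, hδ'⟩ := hev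
    refine ⟨min y (x + δ/2), ?_, lt_min hy (by linarith), min_le_left _ _⟩
    · -- show membership in s
      set u := min y (x + δ/2) with hu
      have hux : x < u := lt_min hy (by linarith)
      have hud : dist u x < δ := by
        rw [Real.dist_eq, abs_of_pos (by linarith)]
        have : u ≤ x + δ/2 := min_le_right _ _
        linarith
      have hsl : slope f x u ∈ Metric.ball (v x) 1 := hδ' hud (by simp [hux.ne'])
      have hsl' : ‖slope f x u‖ ≤ M + 1 := by
        have h1 : ‖slope f x u - v x‖ < 1 := by rwa [Metric.mem_ball, dist_eq_norm] at hsl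
        calc ‖slope f x u‖ ≤ ‖v x‖ + ‖slope f x u - v x‖ := by
              have := norm_sub_norm_le (slope f x u) (v x); linarith
          _ ≤ M + 1 := by linarith
      have hfu : f u - f x = (u - x) • slope f x u := by
        rw [slope_def_module, smul_smul, mul_inv_cancel₀ (sub_ne_zero.2 hux.ne'), one_smul]
      have : ‖f u - f x‖ ≤ (M+1) * (u - x) := by
        rw [hfu, norm_smul, Real.norm_eq_abs, abs_of_pos (by linarith)]
        calc (u - x) * ‖slope f x u‖ ≤ (u - x) * (M + 1) := by
              exact mul_le_mul_of_nonneg_left hsl' (by linarith)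
          _ = (M+1) * (u - x) := mul_comm _ _
      calc ‖f u - f 0‖ ≤ ‖f u - f x‖ + ‖f x - f 0‖ := norm_sub_le_norm_sub_add_norm_sub _ _ _
        _ ≤ (M+1) * (u - x) + (M+1) * x := add_le_add this hx
        _ = (M+1) * u := by ring

/-- two-sided flow displacement bound -/
lemma flow_bound (Φ : ℝ × E → E) (Y : E → E)
    (hΦ0 : ∀ p, Φ (0, p) = p)
    (hΦ : ∀ a p, HasDerivAt (fun t => Φ (t, p)) (Y (Φ (a, p))) a)
    (z : E) (M : ℝ) (hM : 0 ≤ M) (hMb : ∀ x, dist x z ≤ 1 → ‖Y x‖ ≤ M)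
    (p : E) (hp : dist p z ≤ 1/2)
    {t : ℝ} (ht : (M+1) * |t| ≤ 1/2) :
    ‖Φ (t, p) - p‖ ≤ (M+1) * |t| := by
  rcases le_or_gt 0 t with h0 | h0
  · have := curve_bound (fun s => Φ (s, p)) (fun s => Y (Φ (s, p))) (fun s => hΦ s p)
      z M hM (fun s h => hMb _ h) (by simp only [hΦ0]; exact hp) h0
      (by rwa [abs_of_nonneg h0] at ht) t ⟨h0, le_refl _⟩
    simp only [hΦ0] at this
    rwa [abs_of_nonneg h0]
  · have hd : ∀ s, HasDerivAt (fun s => Φ (-s, p)) ((-1 : ℝ) • Y (Φ (-s, p))) s := by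
      intro s
      exact HasDerivAt.scomp s (hΦ (-s) p) (hasDerivAt_neg s)
    have := curve_bound (fun s => Φ (-s, p)) (fun s => (-1 : ℝ) • Y (Φ (-s, p)))
      hd z M hM (fun s h => by simpa using hMb _ h) (by simp only [neg_zero, hΦ0]; exact hp) (t := -t) (by linarith)
      (by rwa [abs_of_neg h0] at ht) (-t) ⟨by linarith, le_refl _⟩
    simp only [neg_neg, neg_zero, hΦ0] at this
    rwa [abs_of_neg h0]

set_option maxHeartbeats 2000000 in
lemma step_lemma [FiniteDimensional ℝ E] {k : ℕ} {z : E}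
    {G : (Fin k → ℝ) → E} {D : (Fin k → ℝ) →L[ℝ] E}
    (hG : HasFDerivAt G D 0) (hG0 : G 0 = z)
    {Y : E → E} (hYc : Continuous Y) {Φ : ℝ × E → E}
    (hΦ0 : ∀ p, Φ (0, p) = p)
    (hΦ : ∀ a p, HasDerivAt (fun t => Φ (t, p)) (Y (Φ (a, p))) a) :
    HasFDerivAt (fun h : Fin (k+1) → ℝ => Φ (h (Fin.last k), G (fun i => h i.castSucc)))
      (D.comp (ContinuousLinearMap.pi fun i : Fin k =>
          ContinuousLinearMap.proj (R := ℝ) (φ := fun _ : Fin (k+1) => ℝ) i.castSucc)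
        + (ContinuousLinearMap.proj (R := ℝ) (φ := fun _ : Fin (k+1) => ℝ)
            (Fin.last k)).smulRight (Y z)) 0 := by
  classical
  set L : ((Fin (k+1)) → ℝ) →L[ℝ] (Fin k → ℝ) :=
    ContinuousLinearMap.pi fun i : Fin k =>
      ContinuousLinearMap.proj (R := ℝ) (φ := fun _ : Fin (k+1) => ℝ) i.castSucc with hL
  have hLapp : ∀ (h : Fin (k+1) → ℝ) (i : Fin k), L h i = h i.castSucc := fun h i => rfl
  have hLnorm : ∀ h : Fin (k+1) → ℝ, ‖L h‖ ≤ ‖h‖ := by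
    intro h
    refine (pi_norm_le_iff_of_nonneg (norm_nonneg h)).2 fun i => ?_
    exact norm_le_pi_norm h _
  -- bound on Y near z
  obtain ⟨M0, hM0⟩ := (isCompact_closedBall z 1).exists_bound_of_continuousOn hYc.continuousOn
  set M : ℝ := max M0 0 with hMdef
  have hM : (0:ℝ) ≤ M := le_max_right _ _
  have hMb : ∀ x, dist x z ≤ 1 → ‖Y x‖ ≤ M := fun x hx =>
    (hM0 x (Metric.mem_closedBall.2 hx)).trans (le_max_left _ _)
  -- linear approximation bound for G
  obtain ⟨c, hc0, hcw⟩ := (hG.isBigO_sub).exists_pos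
  rw [Asymptotics.isBigOWith_iff] at hcw
  rw [Metric.eventually_nhds_iff] at hcw
  obtain ⟨δ₁, hδ₁, hδ₁'⟩ := hcw
  have hGest : ∀ w : Fin k → ℝ, dist w 0 < δ₁ → ‖G w - z‖ ≤ c * ‖w‖ := by
    intro w hw
    have := hδ₁' hw
    simpa [hG0] using this
  rw [hasFDerivAt_iff_isLittleO_nhds_zero]
  have hA : (fun h : Fin (k+1) → ℝ => G (L h) - z - D (L h)) =o[nhds 0] (fun h => h) := by
    have h1 : (fun w : Fin k → ℝ => G w - z - D w) =o[nhds 0] (fun w => w) := by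
      have := hG.isLittleO
      simpa [hG0] using this
    have hL0 : Filter.Tendsto L (nhds 0) (nhds 0) := by
      simpa using L.continuous.tendsto 0
    have h2 := h1.comp_tendsto hL0
    exact h2.trans_isBigO (L.isBigO_id _)
  have hB : (fun h : Fin (k+1) → ℝ =>
      Φ (h (Fin.last k), G (L h)) - G (L h) - (h (Fin.last k)) • Y z) =o[nhds 0]
      (fun h => h) := by
    rw [Asymptotics.isLittleO_iff]
    intro ε hε
    obtain ⟨ρ, hρ0, hρ⟩ := Metric.continuousAt_iff.1 (hYc.continuousAt (x := z)) ε hε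
    set δ : ℝ := min δ₁ (min ((1/2)/(c+1)) (min ((1/2)/(M+1)) (ρ/(c+M+2)))) with hδdef
    have hδpos : 0 < δ := by
      refine lt_min hδ₁ (lt_min (by positivity) (lt_min (by positivity) (by positivity)))
    rw [Metric.eventually_nhds_iff]
    refine ⟨δ, hδpos, ?_⟩
    intro h hh
    rw [dist_zero_right] at hh
    set t : ℝ := h (Fin.last k) with htdef
    set q : E := G (L h) with hqdef
    have hth : |t| ≤ ‖h‖ := by
      have := norm_le_pi_norm h (Fin.last k)
      simpa [Real.norm_eq_abs] using this
    have hLh : ‖L h‖ ≤ ‖h‖ := hLnorm h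
    have hqz : ‖q - z‖ ≤ c * ‖h‖ := by
      have h1 : dist (L h) 0 < δ₁ := by
        rw [dist_zero_right]
        exact lt_of_le_of_lt hLh (lt_of_lt_of_le hh (min_le_left _ _))
      exact (hGest _ h1).trans (mul_le_mul_of_nonneg_left hLh hc0.le)
    have hch : c * ‖h‖ ≤ 1/2 := by
      have h1 : ‖h‖ ≤ (1/2)/(c+1) := le_of_lt (lt_of_lt_of_le hh
        ((min_le_right _ _).trans (min_le_left _ _)))
      have h2 : c * ‖h‖ ≤ c * ((1/2)/(c+1)) := mul_le_mul_of_nonneg_left h1 hc0.le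
      refine h2.trans ?_
      have e : c * (1/2/(c+1)) = c/(c+1) * (1/2) := by ring
      rw [e]
      have e2 : c/(c+1) ≤ 1 := by
        rw [div_le_one (by positivity)]; linarith
      nlinarith
    have hqz' : dist q z ≤ 1/2 := by rw [dist_eq_norm]; exact hqz.trans hch
    have hhM : ‖h‖ ≤ (1/2)/(M+1) := le_of_lt (lt_of_lt_of_le hh
      ((min_le_right _ _).trans ((min_le_right _ _).trans (min_le_left _ _))))
    -- flow stays near z for |s| ≤ |t|
    have hflow : ∀ s : ℝ, |s| ≤ |t| → ‖Φ (s, q) - q‖ ≤ (M+1) * ‖h‖ := by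
      intro s hs
      have hs' : |s| ≤ ‖h‖ := hs.trans hth
      have h1 : (M+1) * |s| ≤ 1/2 := by
        have h2 := mul_le_mul_of_nonneg_left (hs'.trans hhM) (by positivity : (0:ℝ) ≤ M+1)
        have e : (M+1) * (1/2/(M+1)) = 1/2 := by
          rw [mul_comm, div_mul_cancel₀ _ (by positivity : (M+1) ≠ 0)]
        rw [e] at h2
        exact h2
      have := flow_bound Φ Y hΦ0 hΦ z M hM hMb q hqz' h1
      exact this.trans (mul_le_mul_of_nonneg_left hs' (by positivity))
    have hnear : ∀ s : ℝ, |s| ≤ |t| → ‖Y (Φ (s, q)) - Y z‖ ≤ ε := by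
      intro s hs
      have h1 : ‖Φ (s, q) - z‖ < ρ := by
        have h2 : ‖Φ (s, q) - z‖ ≤ ‖Φ (s, q) - q‖ + ‖q - z‖ := norm_sub_le_norm_sub_add_norm_sub _ _ _
        have h3 : ‖Φ (s, q) - z‖ ≤ (c + M + 1) * ‖h‖ := by
          have := hflow s hs
          nlinarith [norm_nonneg h]
        have h4 : ‖h‖ < ρ/(c+M+2) := lt_of_lt_of_le hh
          ((min_le_right _ _).trans ((min_le_right _ _).trans (min_le_right _ _)))
        have h5 : (c + M + 1) * ‖h‖ < (c + M + 1) * (ρ/(c+M+2)) := by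
          refine mul_lt_mul_of_pos_left h4 (by positivity)
        refine h3.trans_lt (h5.trans_le ?_)
        rw [← mul_div_assoc, div_le_iff₀ (by positivity)]
        nlinarith
      have := hρ (x := Φ (s, q)) (by rwa [dist_eq_norm])
      rw [dist_eq_norm] at this
      exact this.le
    -- integral representation
    have hcurve : Continuous fun s => Φ (s, q) :=
      continuous_iff_continuousAt.2 fun s => (hΦ s q).continuousAt
    have hint1 : IntervalIntegrable (fun s => Y (Φ (s, q))) MeasureTheory.volume 0 t :=
      (hYc.comp hcurve).intervalIntegrable 0 t
    have heq1 : ∫ s in (0:ℝ)..t, Y (Φ (s, q)) = Φ (t, q) - q := by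
      have := intervalIntegral.integral_eq_sub_of_hasDerivAt
        (f := fun s => Φ (s, q)) (f' := fun s => Y (Φ (s, q)))
        (fun s _ => hΦ s q) hint1
      simpa [hΦ0] using this
    have heq2 : Φ (t, q) - q - t • Y z = ∫ s in (0:ℝ)..t, (Y (Φ (s, q)) - Y z) := by
      rw [intervalIntegral.integral_sub hint1 intervalIntegrable_const,
        intervalIntegral.integral_const, heq1, sub_zero]
    rw [heq2]
    have hbound := intervalIntegral.norm_integral_le_of_norm_le_const
      (C := ε) (f := fun s => Y (Φ (s, q)) - Y z) (a := 0) (b := t) ?_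
    · refine hbound.trans ?_
      rw [sub_zero]
      exact mul_le_mul_of_nonneg_left hth hε.le
    · intro s hs
      refine hnear s ?_
      rcases Set.mem_uIoc.1 hs with ⟨h1, h2⟩ | ⟨h1, h2⟩
      · rw [abs_of_pos h1]; exact h2.trans (le_abs_self t)
      · rw [abs_of_nonpos h2]
        have : -s ≤ -t := by linarith
        exact this.trans (neg_le_abs t)
  have hfun : (fun h : Fin (k+1) → ℝ =>
      (fun h : Fin (k+1) → ℝ => Φ (h (Fin.last k), G (fun i => h i.castSucc))) (0 + h)
        - (fun h : Fin (k+1) → ℝ => Φ (h (Fin.last k), G (fun i => h i.castSucc))) 0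
        - (D.comp L + (ContinuousLinearMap.proj (R := ℝ) (φ := fun _ : Fin (k+1) => ℝ)
            (Fin.last k)).smulRight (Y z)) h)
      = fun h => (G (L h) - z - D (L h)) +
          (Φ (h (Fin.last k), G (L h)) - G (L h) - (h (Fin.last k)) • Y z) := by
    funext h
    simp only [zero_add, Pi.add_apply, Pi.zero_apply, ContinuousLinearMap.add_apply,
      ContinuousLinearMap.comp_apply, ContinuousLinearMap.smulRight_apply,
      ContinuousLinearMap.proj_apply, hΦ0]
    rw [show (fun _ : Fin k => (0:ℝ)) = (0 : Fin k → ℝ) from rfl, hG0]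
    rw [show (fun i : Fin k => h i.castSucc) = L h from rfl]
    abel
  rw [hfun]
  exact hA.add hB

lemma foldl_fixed {α : Type*} : ∀ (n : ℕ) (f : α → Fin n → α), (∀ q i, f q i = q) →
    ∀ x, Fin.foldl n f x = x := by
  intro n
  induction n with
  | zero => intro f hf x; exact Fin.foldl_zero f x
  | succ n ih =>
    intro f hf x
    rw [Fin.foldl_succ, hf x 0]
    exact ih _ (fun q i => hf q i.succ) x

lemma exp_aux [FiniteDimensional ℝ E] :
    ∀ (m : ℕ) (Y : Fin m → E → E), (∀ i, Continuous (Y i)) →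
    ∀ (Φ : Fin m → ℝ × E → E), (∀ i p, Φ i (0, p) = p) →
    (∀ i a p, HasDerivAt (fun t => Φ i (t, p)) (Y i (Φ i (a, p))) a) →
    ∀ z : E,
    HasFDerivAt (fun h : Fin m → ℝ => Fin.foldl m (fun q i => Φ i (h i, q)) z)
      (∑ i : Fin m,
        (ContinuousLinearMap.proj (R := ℝ) (φ := fun _ : Fin m => ℝ) i).smulRight (Y i z))
      0 := by
  intro m
  induction m with
  | zero =>
    intro Y hYc Φ hΦ0 hΦ z
    simp only [Fin.foldl_zero, Finset.univ_eq_empty, Finset.sum_empty]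
    exact hasFDerivAt_const z 0
  | succ m IH =>
    intro Y hYc Φ hΦ0 hΦ z
    set G : (Fin m → ℝ) → E := fun w => Fin.foldl m (fun q i => Φ i.castSucc (w i, q)) z
      with hGdef
    have hG := IH (fun i => Y i.castSucc) (fun i => hYc _) (fun i => Φ i.castSucc)
      (fun i p => hΦ0 _ p) (fun i a p => hΦ _ a p) z
    have hG0 : G 0 = z := by
      refine foldl_fixed m _ (fun q i => ?_) z
      simp only [Pi.zero_apply, hΦ0]
    have hstep := step_lemma hG hG0 (hYc (Fin.last m)) (fun p => hΦ0 _ p)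
      (fun a p => hΦ (Fin.last m) a p)
    have hfun : (fun h : Fin (m+1) → ℝ => Fin.foldl (m+1) (fun q i => Φ i (h i, q)) z)
        = fun h : Fin (m+1) → ℝ =>
            Φ (Fin.last m) (h (Fin.last m), G (fun i => h i.castSucc)) := by
      funext h
      rw [Fin.foldl_succ_last]
    have hder : (∑ i : Fin (m+1),
          (ContinuousLinearMap.proj (R := ℝ) (φ := fun _ : Fin (m+1) => ℝ) i).smulRight
            (Y i z))
        = (∑ i : Fin m,
            (ContinuousLinearMap.proj (R := ℝ) (φ := fun _ : Fin m => ℝ) i).smulRight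
              (Y i.castSucc z)).comp
            (ContinuousLinearMap.pi fun i : Fin m =>
              ContinuousLinearMap.proj (R := ℝ) (φ := fun _ : Fin (m+1) => ℝ) i.castSucc)
          + (ContinuousLinearMap.proj (R := ℝ) (φ := fun _ : Fin (m+1) => ℝ)
              (Fin.last m)).smulRight (Y (Fin.last m) z) := by
      rw [Fin.sum_univ_castSucc]
      congr 1
      rw [ContinuousLinearMap.finset_sum_comp]
      refine Finset.sum_congr rfl fun i _ => ?_
      exact ContinuousLinearMap.ext fun x => rfl
    rw [hfun, hder]
    exact hstep


/-- The exponential-type coordinate map `E(h₀,…,hₙ) = φₙ(hₙ, … φ₀(h₀, z) …)` is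
differentiable at `h = 0` with differential `(h₀,…,hₙ) ↦ Σ hᵢ • Yᵢ(z)`; in particular,
if `n + 1 = N` and the `Yᵢ(z)` form a basis, this differential is invertible. -/
theorem exponential_map_jacobian {N n : ℕ}
    (Y : Fin (n + 1) → EuclideanSpace ℝ (Fin N) → EuclideanSpace ℝ (Fin N))
    (hY : ∀ i, ContDiff ℝ 1 (Y i))
    (Φ : Fin (n + 1) → ℝ × EuclideanSpace ℝ (Fin N) → EuclideanSpace ℝ (Fin N))
    (hΦ0 : ∀ i p, Φ i (0, p) = p)
    (hΦ : ∀ (i : Fin (n + 1)) (a : ℝ) (p : EuclideanSpace ℝ (Fin N)),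
      HasDerivAt (fun t => Φ i (t, p)) (Y i (Φ i (a, p))) a)
    (z : EuclideanSpace ℝ (Fin N)) :
    HasFDerivAt
      (fun h : Fin (n + 1) → ℝ => Fin.foldl (n + 1) (fun q i => Φ i (h i, q)) z)
      (∑ i : Fin (n + 1),
        (ContinuousLinearMap.proj (R := ℝ) (φ := fun _ : Fin (n + 1) => ℝ) i).smulRight
          (Y i z))
      (0 : Fin (n + 1) → ℝ) ∧
    (n + 1 = N → LinearIndependent ℝ (fun i => Y i z) →
      Submodule.span ℝ (Set.range fun i => Y i z) = ⊤ →
      Function.Bijective fun h : Fin (n + 1) → ℝ => ∑ i : Fin (n + 1), h i • Y i z) := by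
  constructor
  · exact exp_aux (n + 1) Y (fun i => (hY i).continuous) Φ hΦ0 hΦ z
  · intro _ hli hsp
    let B : Module.Basis (Fin (n + 1)) ℝ (EuclideanSpace ℝ (Fin N)) := Module.Basis.mk hli hsp.ge
    have hfun : (fun h : Fin (n + 1) → ℝ => ∑ i : Fin (n + 1), h i • Y i z)
        = ⇑(B.equivFun.symm) := by
      funext h
      rw [Module.Basis.equivFun_symm_apply]
      refine Finset.sum_congr rfl fun i _ => ?_
      rw [show B i = Y i z from by simp [B, Module.Basis.coe_mk]]
    rw [hfun]
    exact B.equivFun.symm.bijective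
end
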